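/- arXiv:1503.00055 — 2 statements merged into one kernel-verified Lean document; each statement's English description precedes it below -/
import Mathlib

section
/- Let F be a Finsler metric on an open set U ⊆ ℝⁿ. Then F is projectively flat on U (i.e. satisfies Hamel's equations ∂²F/∂x^l∂y^k = ∂²F/∂x^k∂y^l) if and only if there exist functions P(x,y), positively homogeneous of degree 1 in y, and K(x,y), positively homogeneous of degree 0 in y, both C^∞ on U × (ℝⁿ∖{0}), such that for all k: ∂F/∂x^k = ∂(PF)/∂y^k and ∂P/∂x^k = P ∂P/∂y^k − (1/(3F)) ∂(K F³)/∂y^k. In this case P = (y^m ∂F/∂x^m)/(2F) is the projective factor of F. -/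
open MeasureTheory

noncomputable section

variable {n : ℕ}

/-- Partial derivative of a function of one vector variable, in direction `i`. -/
def pd (f : (Fin n → ℝ) → ℝ) (i : Fin n) (x : Fin n → ℝ) : ℝ :=
  fderiv ℝ f x (Pi.single i 1)

/-- Partial derivative of `T = T(x,y)` in the fibre variable `y^i`. -/
def dy (T : (Fin n → ℝ) → (Fin n → ℝ) → ℝ) (i : Fin n) :
    (Fin n → ℝ) → (Fin n → ℝ) → ℝ :=
  fun x y => fderiv ℝ (T x) y (Pi.single i 1)

/-- Partial derivative of `T = T(x,y)` in the base variable `x^i`. -/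
def dx (T : (Fin n → ℝ) → (Fin n → ℝ) → ℝ) (i : Fin n) :
    (Fin n → ℝ) → (Fin n → ℝ) → ℝ :=
  fun x y => fderiv ℝ (fun x' => T x' y) x (Pi.single i 1)

/-- The square `F²` of a metric. -/
def funSq (F : (Fin n → ℝ) → (Fin n → ℝ) → ℝ) : (Fin n → ℝ) → (Fin n → ℝ) → ℝ :=
  fun x y => (F x y) ^ 2

/-- The fundamental tensor `g_{ij} = ½ ∂²(F²)/∂y^i∂y^j`. -/
def gMat (F : (Fin n → ℝ) → (Fin n → ℝ) → ℝ) (x y : Fin n → ℝ) :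
    Matrix (Fin n) (Fin n) ℝ :=
  Matrix.of fun i j => (1 / 2) * dy (dy (funSq F) j) i x y

/-- `F` is a Finsler metric on the open connected set `U ⊆ ℝⁿ`. -/
structure IsFinslerMetric (U : Set (Fin n → ℝ))
    (F : (Fin n → ℝ) → (Fin n → ℝ) → ℝ) : Prop where
  isOpen : IsOpen U
  isConnected : IsConnected U
  continuousOn : ContinuousOn (fun p : (Fin n → ℝ) × (Fin n → ℝ) => F p.1 p.2)
    (U ×ˢ Set.univ)
  smoothOn : ContDiffOn ℝ (⊤ : ℕ∞) (fun p : (Fin n → ℝ) × (Fin n → ℝ) => F p.1 p.2)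
    (U ×ˢ {y : Fin n → ℝ | y ≠ 0})
  pos : ∀ x ∈ U, ∀ y : Fin n → ℝ, y ≠ 0 → 0 < F x y
  map_zero : ∀ x ∈ U, F x 0 = 0
  homog : ∀ x ∈ U, ∀ y : Fin n → ℝ, ∀ c : ℝ, 0 < c → F x (c • y) = c * F x y
  posDef : ∀ x ∈ U, ∀ y : Fin n → ℝ, y ≠ 0 → (gMat F x y).PosDef

/-- Geodesic coefficients `G^i = ¼ g^{il}( y^m ∂²(F²)/∂x^m∂y^l − ∂(F²)/∂x^l )`. -/
def geoG (F : (Fin n → ℝ) → (Fin n → ℝ) → ℝ) (i : Fin n) :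
    (Fin n → ℝ) → (Fin n → ℝ) → ℝ :=
  fun x y => (1 / 4) * ∑ l, (gMat F x y)⁻¹ i l *
    ((∑ m, y m * dx (dy (funSq F) l) m x y) - dx (funSq F) l x y)

/-- Riemann curvature `R^i_k`. -/
def RiemCurv (F : (Fin n → ℝ) → (Fin n → ℝ) → ℝ) (i k : Fin n) :
    (Fin n → ℝ) → (Fin n → ℝ) → ℝ :=
  fun x y =>
    2 * dx (geoG F i) k x y
      - (∑ l, y l * dx (dy (geoG F i) k) l x y)
      + 2 * ∑ l, geoG F l x y * dy (dy (geoG F i) k) l x y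
      - ∑ l, dy (geoG F i) l x y * dy (geoG F l) k x y

/-- `F` is of scalar flag curvature `K` on `U`:  `K` is positively homogeneous of
degree 0 in `y` and `R^i_k = K (F² δ^i_k − F F_{y^k} y^i)`. -/
def IsScalarFlagCurv (U : Set (Fin n → ℝ))
    (F K : (Fin n → ℝ) → (Fin n → ℝ) → ℝ) : Prop :=
  (∀ x ∈ U, ∀ y : Fin n → ℝ, y ≠ 0 → ∀ c : ℝ, 0 < c → K x (c • y) = K x y) ∧
  ∀ x ∈ U, ∀ y : Fin n → ℝ, y ≠ 0 → ∀ i k : Fin n,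
    RiemCurv F i k x y =
      K x y * ((F x y) ^ 2 * (if i = k then (1 : ℝ) else 0)
        - F x y * dy F k x y * y i)

/-- The scalar function `θ(x,y) = θ_i(x) y^i` associated with a 1-form. -/
def oneForm (θ : (Fin n → ℝ) → Fin n → ℝ) : (Fin n → ℝ) → (Fin n → ℝ) → ℝ :=
  fun x y => ∑ i, θ x i * y i

/-- `F` is a Randers metric on `U`: `F = √(a_{ij}y^iy^j) + b_i y^i` with `(a_{ij})`
a smooth field of symmetric positive definite matrices and `b_i` smooth. -/
def IsRandersMetric (U : Set (Fin n → ℝ))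
    (F : (Fin n → ℝ) → (Fin n → ℝ) → ℝ) : Prop :=
  ∃ a : (Fin n → ℝ) → Fin n → Fin n → ℝ, ∃ b : (Fin n → ℝ) → Fin n → ℝ,
    ContDiffOn ℝ (⊤ : ℕ∞) a U ∧ ContDiffOn ℝ (⊤ : ℕ∞) b U ∧
    (∀ x ∈ U, (∀ i j, a x i j = a x j i) ∧ (Matrix.of (a x)).PosDef) ∧
    (∀ x ∈ U, ∀ y : Fin n → ℝ,
      F x y = Real.sqrt (∑ i, ∑ j, a x i j * y i * y j) + ∑ i, b x i * y i)

/-- Busemann–Hausdorff volume density `σ_F(x) = Vol(𝔹ⁿ)/Vol{y : F(x,y) < 1}`. -/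
def sigmaBH (F : (Fin n → ℝ) → (Fin n → ℝ) → ℝ) (x : Fin n → ℝ) : ℝ :=
  (volume {y : Fin n → ℝ | ∑ i, (y i) ^ 2 < 1}).toReal /
    (volume {y : Fin n → ℝ | F x y < 1}).toReal

/-- S-curvature `S = ∂G^m/∂y^m − y^m ∂(ln σ_F)/∂x^m`. -/
def SCurv (F : (Fin n → ℝ) → (Fin n → ℝ) → ℝ) :
    (Fin n → ℝ) → (Fin n → ℝ) → ℝ :=
  fun x y => (∑ m, dy (geoG F m) m x y)
    - ∑ m, y m * pd (fun x' => Real.log (sigmaBH F x')) m x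

/-- Horizontal (Berwald) covariant derivative of a scalar:
`T_{|k} = ∂T/∂x^k − N^m_k ∂T/∂y^m` with `N^m_k = ∂G^m/∂y^k`. -/
def hD (F T : (Fin n → ℝ) → (Fin n → ℝ) → ℝ) (k : Fin n) :
    (Fin n → ℝ) → (Fin n → ℝ) → ℝ :=
  fun x y => dx T k x y - ∑ m, dy (geoG F m) k x y * dy T m x y

/-- Horizontal (Berwald) covariant derivative of a covector field:
`T_{i|j} = ∂T_i/∂x^j − N^m_j ∂T_i/∂y^m − T_m Γ^m_{ij}`. -/
def hDCov (F : (Fin n → ℝ) → (Fin n → ℝ) → ℝ)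
    (T : Fin n → (Fin n → ℝ) → (Fin n → ℝ) → ℝ) (i j : Fin n) :
    (Fin n → ℝ) → (Fin n → ℝ) → ℝ :=
  fun x y => dx (T i) j x y - (∑ m, dy (geoG F m) j x y * dy (T i) m x y)
    - ∑ m, T m x y * dy (dy (geoG F m) i) j x y

/-- Hamel's projective flatness equations on `U`. -/
def IsProjFlat (U : Set (Fin n → ℝ))
    (F : (Fin n → ℝ) → (Fin n → ℝ) → ℝ) : Prop :=
  ∀ x ∈ U, ∀ y : Fin n → ℝ, y ≠ 0 → ∀ k l : Fin n,
    dx (dy F k) l x y = dx (dy F l) k x y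

/-- Projective factor `P = (y^m ∂F/∂x^m)/(2F)` of a projectively flat metric. -/
def projFactor (F : (Fin n → ℝ) → (Fin n → ℝ) → ℝ) :
    (Fin n → ℝ) → (Fin n → ℝ) → ℝ :=
  fun x y => (∑ m, y m * dx F m x y) / (2 * F x y)

/-- Flag curvature `K = (P² − y^m ∂P/∂x^m)/F²` of a projectively flat metric. -/
def flagCurvPF (F : (Fin n → ℝ) → (Fin n → ℝ) → ℝ) :
    (Fin n → ℝ) → (Fin n → ℝ) → ℝ :=
  fun x y => ((projFactor F x y) ^ 2 - ∑ m, y m * dx (projFactor F) m x y) /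
    (F x y) ^ 2

section BerwaldAux

abbrev Om (U : Set (Fin n → ℝ)) : Set ((Fin n → ℝ) × (Fin n → ℝ)) :=
  U ×ˢ {y | y ≠ 0}

def Adm (U : Set (Fin n → ℝ)) (T : (Fin n → ℝ) → (Fin n → ℝ) → ℝ) : Prop :=
  ContDiffOn ℝ (⊤ : ℕ∞) (fun p : (Fin n → ℝ) × (Fin n → ℝ) => T p.1 p.2) (Om U)

lemma om_open {U : Set (Fin n → ℝ)} (hU : IsOpen U) : IsOpen (Om U) :=
  hU.prod isOpen_ne

lemma Adm.cAt {U T} (hT : Adm (n := n) U T) (hU : IsOpen U) {x y}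
    (hx : x ∈ U) (hy : y ≠ 0) :
    ContDiffAt ℝ (⊤ : ℕ∞) (fun p : (Fin n → ℝ) × (Fin n → ℝ) => T p.1 p.2) (x, y) :=
  ContDiffOn.contDiffAt hT ((om_open hU).mem_nhds (Set.mk_mem_prod hx hy))

section PointAPI
variable {U : Set (Fin n → ℝ)} {T : (Fin n → ℝ) → (Fin n → ℝ) → ℝ}
  {x y : Fin n → ℝ}

/-- inclusion y' ↦ (x, y') has derivative inr -/
lemma hasY (hT : Adm U T) (hU : IsOpen U) (hx : x ∈ U) (hy : y ≠ 0) :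
    HasFDerivAt (T x)
      ((fderiv ℝ (fun p : (Fin n → ℝ) × (Fin n → ℝ) => T p.1 p.2) (x, y)).comp
        (ContinuousLinearMap.inr ℝ (Fin n → ℝ) (Fin n → ℝ))) y := by
  have hΦ : HasFDerivAt (fun p : (Fin n → ℝ) × (Fin n → ℝ) => T p.1 p.2)
      (fderiv ℝ (fun p : (Fin n → ℝ) × (Fin n → ℝ) => T p.1 p.2) (x, y)) (x, y) :=
    (((hT.cAt hU hx hy).differentiableAt (by simp))).hasFDerivAt
  have hι : HasFDerivAt (fun y' : Fin n → ℝ => ((x, y') : (Fin n → ℝ) × (Fin n → ℝ)))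
      (ContinuousLinearMap.inr ℝ (Fin n → ℝ) (Fin n → ℝ)) y :=
    HasFDerivAt.prodMk (hasFDerivAt_const x y) (hasFDerivAt_id y)
  exact hΦ.comp y hι

lemma hasX (hT : Adm U T) (hU : IsOpen U) (hx : x ∈ U) (hy : y ≠ 0) :
    HasFDerivAt (fun x' => T x' y)
      ((fderiv ℝ (fun p : (Fin n → ℝ) × (Fin n → ℝ) => T p.1 p.2) (x, y)).comp
        (ContinuousLinearMap.inl ℝ (Fin n → ℝ) (Fin n → ℝ))) x := by
  have hΦ : HasFDerivAt (fun p : (Fin n → ℝ) × (Fin n → ℝ) => T p.1 p.2)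
      (fderiv ℝ (fun p : (Fin n → ℝ) × (Fin n → ℝ) => T p.1 p.2) (x, y)) (x, y) :=
    (((hT.cAt hU hx hy).differentiableAt (by simp))).hasFDerivAt
  have hι : HasFDerivAt (fun x' : Fin n → ℝ => ((x', y) : (Fin n → ℝ) × (Fin n → ℝ)))
      (ContinuousLinearMap.inl ℝ (Fin n → ℝ) (Fin n → ℝ)) x :=
    HasFDerivAt.prodMk (hasFDerivAt_id x) (hasFDerivAt_const y x)
  exact hΦ.comp x hι

lemma diffY (hT : Adm U T) (hU : IsOpen U) (hx : x ∈ U) (hy : y ≠ 0) :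
    DifferentiableAt ℝ (T x) y := (hasY hT hU hx hy).differentiableAt

lemma diffX (hT : Adm U T) (hU : IsOpen U) (hx : x ∈ U) (hy : y ≠ 0) :
    DifferentiableAt ℝ (fun x' => T x' y) x := (hasX hT hU hx hy).differentiableAt

lemma dy_eq (hT : Adm U T) (hU : IsOpen U) (hx : x ∈ U) (hy : y ≠ 0) (k : Fin n) :
    dy T k x y = fderiv ℝ (fun p : (Fin n → ℝ) × (Fin n → ℝ) => T p.1 p.2) (x, y)
      (0, Pi.single k 1) := by
  simp [dy, (hasY hT hU hx hy).fderiv]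

lemma dx_eq (hT : Adm U T) (hU : IsOpen U) (hx : x ∈ U) (hy : y ≠ 0) (k : Fin n) :
    dx T k x y = fderiv ℝ (fun p : (Fin n → ℝ) × (Fin n → ℝ) => T p.1 p.2) (x, y)
      (Pi.single k 1, 0) := by
  simp [dx, (hasX hT hU hx hy).fderiv]

end PointAPI

section AdmAPI
variable {U : Set (Fin n → ℝ)} {T : (Fin n → ℝ) → (Fin n → ℝ) → ℝ}

lemma Adm.fderiv_smooth (hT : Adm U T) (hU : IsOpen U) :
    ContDiffOn ℝ (⊤ : ℕ∞)
      (fderiv ℝ (fun p : (Fin n → ℝ) × (Fin n → ℝ) => T p.1 p.2)) (Om U) := by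
  have hT' : ContDiffOn ℝ ((⊤ : ℕ∞) : WithTop ℕ∞)
      (fun p : (Fin n → ℝ) × (Fin n → ℝ) => T p.1 p.2) (Om U) := by
    exact_mod_cast hT
  exact_mod_cast ((contDiffOn_infty_iff_fderiv_of_isOpen (om_open hU)).1 hT').2

lemma Adm.dy (hT : Adm U T) (hU : IsOpen U) (k : Fin n) : Adm U (dy T k) := by
  have h : ContDiffOn ℝ (⊤ : ℕ∞)
      (fun p : (Fin n → ℝ) × (Fin n → ℝ) =>
        fderiv ℝ (fun p : (Fin n → ℝ) × (Fin n → ℝ) => T p.1 p.2) p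
          ((0, Pi.single k 1) : (Fin n → ℝ) × (Fin n → ℝ))) (Om U) :=
    (hT.fderiv_smooth hU).clm_apply contDiffOn_const
  refine ContDiffOn.congr h ?_
  rintro ⟨x, y⟩ ⟨hx, hy⟩
  exact dy_eq hT hU hx hy k

lemma Adm.dx (hT : Adm U T) (hU : IsOpen U) (k : Fin n) : Adm U (dx T k) := by
  have h : ContDiffOn ℝ (⊤ : ℕ∞)
      (fun p : (Fin n → ℝ) × (Fin n → ℝ) =>
        fderiv ℝ (fun p : (Fin n → ℝ) × (Fin n → ℝ) => T p.1 p.2) p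
          ((Pi.single k 1, 0) : (Fin n → ℝ) × (Fin n → ℝ))) (Om U) :=
    (hT.fderiv_smooth hU).clm_apply contDiffOn_const
  refine ContDiffOn.congr h ?_
  rintro ⟨x, y⟩ ⟨hx, hy⟩
  exact dx_eq hT hU hx hy k

end AdmAPI

section Rules
variable {U : Set (Fin n → ℝ)} {A B : (Fin n → ℝ) → (Fin n → ℝ) → ℝ}
  {x y : Fin n → ℝ} {k : Fin n}

lemma dy_congr {T₁ T₂ : (Fin n → ℝ) → (Fin n → ℝ) → ℝ}
    (h : ∀ y' : Fin n → ℝ, y' ≠ 0 → T₁ x y' = T₂ x y') (hy : y ≠ 0) (k : Fin n) :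
    dy T₁ k x y = dy T₂ k x y := by
  have hev : T₁ x =ᶠ[nhds y] T₂ x := by
    filter_upwards [isOpen_ne.mem_nhds hy] with y' hy' using h y' hy'
  simp only [dy, hev.fderiv_eq]

lemma dx_congr {T₁ T₂ : (Fin n → ℝ) → (Fin n → ℝ) → ℝ} (hU : IsOpen U)
    (h : ∀ x' ∈ U, T₁ x' y = T₂ x' y) (hx : x ∈ U) (k : Fin n) :
    dx T₁ k x y = dx T₂ k x y := by
  have hev : (fun x' => T₁ x' y) =ᶠ[nhds x] fun x' => T₂ x' y := by
    filter_upwards [hU.mem_nhds hx] with x' hx' using h x' hx'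
  simp only [dx, hev.fderiv_eq]

lemma dy_mul (hA : DifferentiableAt ℝ (A x) y) (hB : DifferentiableAt ℝ (B x) y) :
    dy (fun x' y' => A x' y' * B x' y') k x y
      = dy A k x y * B x y + A x y * dy B k x y := by
  simp only [dy]
  rw [fderiv_fun_mul hA hB]
  simp [mul_comm, add_comm]

lemma dx_mul (hA : DifferentiableAt ℝ (fun x' => A x' y) x)
    (hB : DifferentiableAt ℝ (fun x' => B x' y) x) :
    dx (fun x' y' => A x' y' * B x' y') k x y
      = dx A k x y * B x y + A x y * dx B k x y := by
  simp only [dx]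
  rw [fderiv_fun_mul hA hB]
  simp [mul_comm, add_comm]

lemma dy_const_mul (c : ℝ) (hA : DifferentiableAt ℝ (A x) y) :
    dy (fun x' y' => c * A x' y') k x y = c * dy A k x y := by
  simp only [dy]
  rw [fderiv_const_mul hA]
  simp

lemma dx_const_mul (c : ℝ) (hA : DifferentiableAt ℝ (fun x' => A x' y) x) :
    dx (fun x' y' => c * A x' y') k x y = c * dx A k x y := by
  simp only [dx]
  rw [fderiv_const_mul hA]
  simp

lemma dy_sum {ι : Type*} [Fintype ι] {f : ι → (Fin n → ℝ) → (Fin n → ℝ) → ℝ}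
    (h : ∀ m, DifferentiableAt ℝ (f m x) y) :
    dy (fun x' y' => ∑ m, f m x' y') k x y = ∑ m, dy (f m) k x y := by
  simp only [dy]
  rw [fderiv_fun_sum (fun m _ => h m)]
  simp

lemma dx_sum {ι : Type*} [Fintype ι] {f : ι → (Fin n → ℝ) → (Fin n → ℝ) → ℝ}
    (h : ∀ m, DifferentiableAt ℝ (fun x' => f m x' y) x) :
    dx (fun x' y' => ∑ m, f m x' y') k x y = ∑ m, dx (f m) k x y := by
  simp only [dx]
  rw [fderiv_fun_sum (fun m _ => h m)]
  simp

lemma dy_coord (m : Fin n) :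
    dy (fun _ y' => y' m) k x y = if k = m then 1 else 0 := by
  simp only [dy]
  have : fderiv ℝ (fun y' : Fin n → ℝ => y' m) y
      = (ContinuousLinearMap.proj m : ((Fin n → ℝ)) →L[ℝ] ℝ) :=
    (ContinuousLinearMap.proj m : ((Fin n → ℝ)) →L[ℝ] ℝ).fderiv
  rw [this]
  simp [ContinuousLinearMap.proj_apply, Pi.single_apply, eq_comm]

end Rules

section Schwarz
variable {U : Set (Fin n → ℝ)} {T : (Fin n → ℝ) → (Fin n → ℝ) → ℝ}
  {x y : Fin n → ℝ}

/-- second joint derivative -/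
def d2 (T : (Fin n → ℝ) → (Fin n → ℝ) → ℝ) (x y : Fin n → ℝ) :=
  fderiv ℝ (fderiv ℝ (fun p : (Fin n → ℝ) × (Fin n → ℝ) => T p.1 p.2)) (x, y)

lemma hasD2 (hT : Adm U T) (hU : IsOpen U) (hx : x ∈ U) (hy : y ≠ 0) :
    HasFDerivAt (fderiv ℝ (fun p : (Fin n → ℝ) × (Fin n → ℝ) => T p.1 p.2))
      (d2 T x y) (x, y) := by
  have h1 : ContDiffAt ℝ (⊤ : ℕ∞)
      (fderiv ℝ (fun p : (Fin n → ℝ) × (Fin n → ℝ) => T p.1 p.2)) (x, y) :=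
    ((hT.fderiv_smooth hU).contDiffAt ((om_open hU).mem_nhds (Set.mk_mem_prod hx hy)))
  exact (h1.differentiableAt (by simp)).hasFDerivAt

lemma d2_symm (hT : Adm U T) (hU : IsOpen U) (hx : x ∈ U) (hy : y ≠ 0)
    (v w : (Fin n → ℝ) × (Fin n → ℝ)) :
    d2 T x y v w = d2 T x y w v := by
  have h : ContDiffAt ℝ ((⊤ : ℕ∞) : WithTop ℕ∞)
      (fun p : (Fin n → ℝ) × (Fin n → ℝ) => T p.1 p.2) (x, y) := by
    exact_mod_cast hT.cAt hU hx hy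
  exact (h.isSymmSndFDerivAt (by refine le_trans ?_ (WithTop.coe_le_coe.2 (le_top : (2:ℕ∞) ≤ ⊤)); simp)) v w

lemma dxdy_eq (hT : Adm U T) (hU : IsOpen U) (hx : x ∈ U) (hy : y ≠ 0) (k l : Fin n) :
    dx (dy T k) l x y = d2 T x y (Pi.single l 1, 0) (0, Pi.single k 1) := by
  have hev : (fun x' => dy T k x' y) =ᶠ[nhds x]
      (fun x' => fderiv ℝ (fun p : (Fin n → ℝ) × (Fin n → ℝ) => T p.1 p.2) (x', y)
        (0, Pi.single k 1)) := by
    filter_upwards [hU.mem_nhds hx] with x' hx' using dy_eq hT hU hx' hy k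
  have hι : HasFDerivAt (fun x' : Fin n → ℝ => ((x', y) : (Fin n → ℝ) × (Fin n → ℝ)))
      (ContinuousLinearMap.inl ℝ (Fin n → ℝ) (Fin n → ℝ)) x :=
    HasFDerivAt.prodMk (hasFDerivAt_id x) (hasFDerivAt_const y x)
  have hcomp := ((ContinuousLinearMap.apply ℝ ℝ
      ((0, Pi.single k 1) : (Fin n → ℝ) × (Fin n → ℝ))).hasFDerivAt.comp (x, y)
      (hasD2 hT hU hx hy)).comp x hι
  have hL : HasFDerivAt
      (fun x' => fderiv ℝ (fun p : (Fin n → ℝ) × (Fin n → ℝ) => T p.1 p.2) (x', y)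
        (0, Pi.single k 1))
      ((((ContinuousLinearMap.apply ℝ ℝ) ((0, Pi.single k 1) : (Fin n → ℝ) × (Fin n → ℝ))).comp
        (d2 T x y)).comp (ContinuousLinearMap.inl ℝ (Fin n → ℝ) (Fin n → ℝ))) x := hcomp
  show fderiv ℝ (fun x' => _) x (Pi.single l 1) = _
  rw [hev.fderiv_eq, hL.fderiv]
  rfl

lemma dydx_eq (hT : Adm U T) (hU : IsOpen U) (hx : x ∈ U) (hy : y ≠ 0) (k l : Fin n) :
    dy (dx T k) l x y = d2 T x y (0, Pi.single l 1) (Pi.single k 1, 0) := by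
  have hev : (fun y' => dx T k x y') =ᶠ[nhds y]
      (fun y' => fderiv ℝ (fun p : (Fin n → ℝ) × (Fin n → ℝ) => T p.1 p.2) (x, y')
        (Pi.single k 1, 0)) := by
    filter_upwards [isOpen_ne.mem_nhds hy] with y' hy' using dx_eq hT hU hx hy' k
  have hι : HasFDerivAt (fun y' : Fin n → ℝ => ((x, y') : (Fin n → ℝ) × (Fin n → ℝ)))
      (ContinuousLinearMap.inr ℝ (Fin n → ℝ) (Fin n → ℝ)) y :=
    HasFDerivAt.prodMk (hasFDerivAt_const x y) (hasFDerivAt_id y)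
  have hcomp := ((ContinuousLinearMap.apply ℝ ℝ
      ((Pi.single k 1, 0) : (Fin n → ℝ) × (Fin n → ℝ))).hasFDerivAt.comp (x, y)
      (hasD2 hT hU hx hy)).comp y hι
  have hL : HasFDerivAt
      (fun y' => fderiv ℝ (fun p : (Fin n → ℝ) × (Fin n → ℝ) => T p.1 p.2) (x, y')
        (Pi.single k 1, 0))
      ((((ContinuousLinearMap.apply ℝ ℝ) ((Pi.single k 1, 0) : (Fin n → ℝ) × (Fin n → ℝ))).comp
        (d2 T x y)).comp (ContinuousLinearMap.inr ℝ (Fin n → ℝ) (Fin n → ℝ))) y := hcomp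
  show fderiv ℝ (fun y' => _) y (Pi.single l 1) = _
  rw [hev.fderiv_eq, hL.fderiv]
  rfl

lemma dxdx_eq (hT : Adm U T) (hU : IsOpen U) (hx : x ∈ U) (hy : y ≠ 0) (k l : Fin n) :
    dx (dx T k) l x y = d2 T x y (Pi.single l 1, 0) (Pi.single k 1, 0) := by
  have hev : (fun x' => dx T k x' y) =ᶠ[nhds x]
      (fun x' => fderiv ℝ (fun p : (Fin n → ℝ) × (Fin n → ℝ) => T p.1 p.2) (x', y)
        (Pi.single k 1, 0)) := by
    filter_upwards [hU.mem_nhds hx] with x' hx' using dx_eq hT hU hx' hy k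
  have hι : HasFDerivAt (fun x' : Fin n → ℝ => ((x', y) : (Fin n → ℝ) × (Fin n → ℝ)))
      (ContinuousLinearMap.inl ℝ (Fin n → ℝ) (Fin n → ℝ)) x :=
    HasFDerivAt.prodMk (hasFDerivAt_id x) (hasFDerivAt_const y x)
  have hcomp := ((ContinuousLinearMap.apply ℝ ℝ
      ((Pi.single k 1, 0) : (Fin n → ℝ) × (Fin n → ℝ))).hasFDerivAt.comp (x, y)
      (hasD2 hT hU hx hy)).comp x hι
  have hL : HasFDerivAt
      (fun x' => fderiv ℝ (fun p : (Fin n → ℝ) × (Fin n → ℝ) => T p.1 p.2) (x', y)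
        (Pi.single k 1, 0))
      ((((ContinuousLinearMap.apply ℝ ℝ) ((Pi.single k 1, 0) : (Fin n → ℝ) × (Fin n → ℝ))).comp
        (d2 T x y)).comp (ContinuousLinearMap.inl ℝ (Fin n → ℝ) (Fin n → ℝ))) x := hcomp
  show fderiv ℝ (fun x' => _) x (Pi.single l 1) = _
  rw [hev.fderiv_eq, hL.fderiv]
  rfl

lemma dydy_eq (hT : Adm U T) (hU : IsOpen U) (hx : x ∈ U) (hy : y ≠ 0) (k l : Fin n) :
    dy (dy T k) l x y = d2 T x y (0, Pi.single l 1) (0, Pi.single k 1) := by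
  have hev : (fun y' => dy T k x y') =ᶠ[nhds y]
      (fun y' => fderiv ℝ (fun p : (Fin n → ℝ) × (Fin n → ℝ) => T p.1 p.2) (x, y')
        (0, Pi.single k 1)) := by
    filter_upwards [isOpen_ne.mem_nhds hy] with y' hy' using dy_eq hT hU hx hy' k
  have hι : HasFDerivAt (fun y' : Fin n → ℝ => ((x, y') : (Fin n → ℝ) × (Fin n → ℝ)))
      (ContinuousLinearMap.inr ℝ (Fin n → ℝ) (Fin n → ℝ)) y :=
    HasFDerivAt.prodMk (hasFDerivAt_const x y) (hasFDerivAt_id y)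
  have hcomp := ((ContinuousLinearMap.apply ℝ ℝ
      ((0, Pi.single k 1) : (Fin n → ℝ) × (Fin n → ℝ))).hasFDerivAt.comp (x, y)
      (hasD2 hT hU hx hy)).comp y hι
  have hL : HasFDerivAt
      (fun y' => fderiv ℝ (fun p : (Fin n → ℝ) × (Fin n → ℝ) => T p.1 p.2) (x, y')
        (0, Pi.single k 1))
      ((((ContinuousLinearMap.apply ℝ ℝ) ((0, Pi.single k 1) : (Fin n → ℝ) × (Fin n → ℝ))).comp
        (d2 T x y)).comp (ContinuousLinearMap.inr ℝ (Fin n → ℝ) (Fin n → ℝ))) y := hcomp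
  show fderiv ℝ (fun y' => _) y (Pi.single l 1) = _
  rw [hev.fderiv_eq, hL.fderiv]
  rfl

lemma schwarz_xy (hT : Adm U T) (hU : IsOpen U) (hx : x ∈ U) (hy : y ≠ 0) (k l : Fin n) :
    dx (dy T k) l x y = dy (dx T l) k x y := by
  rw [dxdy_eq hT hU hx hy, dydx_eq hT hU hx hy, d2_symm hT hU hx hy]

lemma schwarz_xx (hT : Adm U T) (hU : IsOpen U) (hx : x ∈ U) (hy : y ≠ 0) (k l : Fin n) :
    dx (dx T k) l x y = dx (dx T l) k x y := by
  rw [dxdx_eq hT hU hx hy, dxdx_eq hT hU hx hy, d2_symm hT hU hx hy]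

lemma schwarz_yy (hT : Adm U T) (hU : IsOpen U) (hx : x ∈ U) (hy : y ≠ 0) (k l : Fin n) :
    dy (dy T k) l x y = dy (dy T l) k x y := by
  rw [dydy_eq hT hU hx hy, dydy_eq hT hU hx hy, d2_symm hT hU hx hy]

end Schwarz

section Euler
variable {U : Set (Fin n → ℝ)} {T : (Fin n → ℝ) → (Fin n → ℝ) → ℝ} {x y : Fin n → ℝ}

lemma fderiv_apply_self {f : (Fin n → ℝ) → ℝ} {y : Fin n → ℝ} :
    fderiv ℝ f y y = ∑ l, y l * fderiv ℝ f y (Pi.single l 1) := by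
  set L := fderiv ℝ f y with hL
  have h0 : L y = ∑ l, L (Pi.single l (y l)) := by
    conv_lhs => rw [show y = ∑ l, Pi.single l (y l) from (Finset.univ_sum_single y).symm]
    rw [map_sum]
  rw [h0]
  refine Finset.sum_congr rfl fun l _ => ?_
  have : (Pi.single l (y l) : Fin n → ℝ) = (y l) • (Pi.single l (1:ℝ) : Fin n → ℝ) := by
    ext j; by_cases h : j = l <;> simp [Pi.single_apply, h]
  rw [this, _root_.map_smul]
  simp

lemma euler_gen {f : (Fin n → ℝ) → ℝ} {y : Fin n → ℝ} (r : ℕ)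
    (hdiff : DifferentiableAt ℝ f y)
    (hom : ∀ c : ℝ, 0 < c → f (c • y) = c ^ r * f y) :
    ∑ l, y l * fderiv ℝ f y (Pi.single l 1) = r * f y := by
  rw [← fderiv_apply_self]
  have hc : HasDerivAt (fun c : ℝ => c • y) y 1 := by
    simpa using (hasDerivAt_id (1:ℝ)).smul_const y
  have hφ : HasDerivAt (fun c : ℝ => f (c • y)) (fderiv ℝ f y y) 1 := by
    have h1 : HasFDerivAt f (fderiv ℝ f y) ((1:ℝ) • y) := by
      simpa using hdiff.hasFDerivAt
    exact h1.comp_hasDerivAt 1 hc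
  have hg : HasDerivAt (fun c : ℝ => c ^ r * f y) (r * f y) 1 := by
    have := (hasDerivAt_pow r (1:ℝ)).mul_const (f y)
    simpa using this
  have hev : (fun c : ℝ => f (c • y)) =ᶠ[nhds 1] fun c : ℝ => c ^ r * f y := by
    filter_upwards [isOpen_Ioi.mem_nhds (by norm_num : (1:ℝ) ∈ Set.Ioi 0)] with c hc'
      using hom c hc'
  exact (hφ.congr_of_eventuallyEq hev.symm).unique hg

lemma eulerY (r : ℕ) (hdiff : DifferentiableAt ℝ (T x) y)
    (hom : ∀ c : ℝ, 0 < c → T x (c • y) = c ^ r * T x y) :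
    ∑ l, y l * dy T l x y = r * T x y :=
  euler_gen r hdiff hom

end Euler

section Main
variable {U : Set (Fin n → ℝ)} {F : (Fin n → ℝ) → (Fin n → ℝ) → ℝ}
  {x y : Fin n → ℝ}

lemma dx_coord0 (m k : Fin n) : dx (fun _ y' => y' m) k x y = 0 := by
  simp [dx, fderiv_const]

/-- homogeneity passes to dx -/
lemma dx_homog {T : (Fin n → ℝ) → (Fin n → ℝ) → ℝ} (hT : Adm U T) (hU : IsOpen U)
    (hx : x ∈ U) (hy : y ≠ 0) {c : ℝ} (hc : 0 < c) (r : ℕ)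
    (hhom : ∀ x' ∈ U, T x' (c • y) = c ^ r * T x' y) (m : Fin n) :
    dx T m x (c • y) = c ^ r * dx T m x y := by
  have hev : (fun x' => T x' (c • y)) =ᶠ[nhds x] fun x' => c ^ r * T x' y := by
    filter_upwards [hU.mem_nhds hx] with x' hx' using hhom x' hx'
  show fderiv ℝ (fun x' => T x' (c • y)) x (Pi.single m 1) = _
  rw [hev.fderiv_eq, fderiv_const_mul (diffX hT hU hx hy)]
  rfl

/-- the contracted derivative  S(x,y) = ∑ y^m ∂F/∂x^m  is admissible -/
lemma adm_qform {T : (Fin n → ℝ) → (Fin n → ℝ) → ℝ} (hT : Adm U T) (hU : IsOpen U) :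
    Adm U (fun x y => ∑ m, y m * dx T m x y) := by
  refine ContDiffOn.sum fun m _ => ContDiffOn.mul ?_ (Adm.dx hT hU m)
  exact ((ContinuousLinearMap.proj m).comp
    (ContinuousLinearMap.snd ℝ (Fin n → ℝ) (Fin n → ℝ))).contDiff.contDiffOn

end Main


section Finsler
variable {U : Set (Fin n → ℝ)} {F : (Fin n → ℝ) → (Fin n → ℝ) → ℝ}

lemma IsFinslerMetric.adm (hF : IsFinslerMetric U F) : Adm U F := hF.smoothOn

lemma IsFinslerMetric.admP (hF : IsFinslerMetric U F) : Adm U (projFactor F) := by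
  have h1 : Adm U (fun x y => ∑ m, y m * dx F m x y) := adm_qform hF.adm hF.isOpen
  refine ContDiffOn.div h1 (contDiffOn_const.mul hF.adm) ?_
  rintro ⟨x, y⟩ ⟨hx, hy⟩
  have := hF.pos x hx y hy
  positivity

/-- basic identity `∑ y^m F_{x^m} = 2 P F` on `Om U`. -/
lemma sum_dxF {x y : Fin n → ℝ} (hF : IsFinslerMetric U F) (hx : x ∈ U) (hy : y ≠ 0) :
    ∑ m, y m * dx F m x y = 2 * projFactor F x y * F x y := by
  have hFpos := hF.pos x hx y hy
  unfold projFactor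
  field_simp

/-- Euler identity for `F`. -/
lemma eulerF {x y : Fin n → ℝ} (hF : IsFinslerMetric U F) (hx : x ∈ U) (hy : y ≠ 0) :
    ∑ l, y l * dy F l x y = F x y := by
  have := eulerY (T := F) (x := x) (y := y) 1 (diffY hF.adm hF.isOpen hx hy)
    (fun c hc => by rw [pow_one]; exact hF.homog x hx y c hc)
  simpa using this

/-- homogeneity of `P`. -/
lemma projFactor_homog {x y : Fin n → ℝ} (hF : IsFinslerMetric U F) (hx : x ∈ U)
    (hy : y ≠ 0) {c : ℝ} (hc : 0 < c) :
    projFactor F x (c • y) = c * projFactor F x y := by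
  have hdx : ∀ m, dx F m x (c • y) = c * dx F m x y := by
    intro m
    have := dx_homog hF.adm hF.isOpen hx hy hc 1
      (fun x' hx' => by rw [pow_one]; exact hF.homog x' hx' y c hc) m
    simpa using this
  have hFc : F x (c • y) = c * F x y := hF.homog x hx y c hc
  have hFpos := hF.pos x hx y hy
  simp only [projFactor, Pi.smul_apply, smul_eq_mul, hdx, hFc]
  rw [show ∑ m, c * y m * (c * dx F m x y) = c ^ 2 * ∑ m, y m * dx F m x y by
    rw [Finset.mul_sum]; exact Finset.sum_congr rfl fun m _ => by ring]
  field_simp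

end Finsler

section Core
variable {U : Set (Fin n → ℝ)} {F : (Fin n → ℝ) → (Fin n → ℝ) → ℝ} {x y : Fin n → ℝ}

lemma coord_diffY (m : Fin n) : DifferentiableAt ℝ (fun y' : Fin n → ℝ => y' m) y :=
  (ContinuousLinearMap.proj m : (Fin n → ℝ) →L[ℝ] ℝ).differentiable.differentiableAt

/-- `∂(∑ y^m T_{x^m})/∂y^k = T_{x^k} + ∑ y^m ∂T_{x^m}/∂y^k` for admissible `T`. -/
lemma dy_qform {T : (Fin n → ℝ) → (Fin n → ℝ) → ℝ} (hT : Adm U T) (hU : IsOpen U)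
    (hx : x ∈ U) (hy : y ≠ 0) (k : Fin n) :
    dy (fun x y => ∑ m, y m * dx T m x y) k x y
      = dx T k x y + ∑ m, y m * dy (dx T m) k x y := by
  rw [dy_sum (f := fun m x y => y m * dx T m x y)
    (fun m => (coord_diffY m).mul (diffY (hT.dx hU m) hU hx hy))]
  have h1 : ∀ m, dy (fun x' y' => y' m * dx T m x' y') k x y
      = (if k = m then (1:ℝ) else 0) * dx T m x y + y m * dy (dx T m) k x y := by
    intro m
    rw [dy_mul (A := fun _ y' => y' m) (B := dx T m) (coord_diffY m)
      (diffY (hT.dx hU m) hU hx hy), dy_coord]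
  rw [Finset.sum_congr rfl fun m _ => h1 m, Finset.sum_add_distrib]
  congr 1
  simp [Finset.sum_ite_eq]

/-- `∑ y^m ∂(dy T k)/∂x^m = ∂(∑ y'^m dy T m)/∂x^k`-type step (contraction into dx). -/
lemma dx_qform_y {T : (Fin n → ℝ) → (Fin n → ℝ) → ℝ} (hT : Adm U T) (hU : IsOpen U)
    (hx : x ∈ U) (hy : y ≠ 0) (k : Fin n) :
    dx (fun x' y' => ∑ m, y' m * dy T m x' y') k x y
      = ∑ m, y m * dx (dy T m) k x y := by
  rw [dx_sum (f := fun m x y => y m * dy T m x y)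
    (fun m => (differentiableAt_const (y m)).mul (diffX (hT.dy hU m) hU hx hy))]
  refine Finset.sum_congr rfl fun m _ => ?_
  rw [dx_mul (A := fun _ y' => y' m) (B := dy T m) (differentiableAt_const (y m))
    (diffX (hT.dy hU m) hU hx hy), dx_coord0]
  ring

/-- Under Hamel's equations, `∂S/∂y^k = 2 F_{x^k}` where `S = ∑ y^m F_{x^m}`. -/
lemma dyS_eq (hF : IsFinslerMetric U F) (hpf : IsProjFlat U F)
    (hx : x ∈ U) (hy : y ≠ 0) (k : Fin n) :
    dy (fun x y => ∑ m, y m * dx F m x y) k x y = 2 * dx F k x y := by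
  have hU := hF.isOpen
  rw [dy_qform hF.adm hU hx hy k]
  have h2 : ∀ m, dy (dx F m) k x y = dx (dy F m) k x y := by
    intro m
    rw [← schwarz_xy hF.adm hU hx hy k m]
    exact (hpf x hx y hy k m).symm ▸ rfl
  have h3 : ∑ m, y m * dy (dx F m) k x y
      = dx (fun x' y' => ∑ m, y' m * dy F m x' y') k x y := by
    rw [dx_qform_y hF.adm hU hx hy k]
    exact Finset.sum_congr rfl fun m _ => by rw [h2 m]
  have h4 : dx (fun x' y' => ∑ m, y' m * dy F m x' y') k x y = dx F k x y := by
    refine dx_congr hU (fun x' hx' => ?_) hx k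
    exact eulerF hF hx' hy
  rw [h3, h4]; ring

/-- `E1`:  `F_{x^k} = (P F)_{y^k}` under Hamel. -/
lemma hamel_E1 (hF : IsFinslerMetric U F) (hpf : IsProjFlat U F)
    (hx : x ∈ U) (hy : y ≠ 0) (k : Fin n) :
    dx F k x y = dy (fun x' y' => projFactor F x' y' * F x' y') k x y := by
  have hU := hF.isOpen
  have hcg : dy (fun x' y' => projFactor F x' y' * F x' y') k x y
      = dy (fun x' y' => (1/2 : ℝ) * ∑ m, y' m * dx F m x' y') k x y := by
    refine dy_congr (fun y' hy' => ?_) hy k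
    have := sum_dxF hF hx hy'
    rw [this]; ring
  rw [hcg, dy_const_mul _ (diffY (adm_qform hF.adm hU) hU hx hy),
    dyS_eq hF hpf hx hy k]
  ring

/-- `E1'` : expanded product form. -/
lemma hamel_E1' (hF : IsFinslerMetric U F) (hpf : IsProjFlat U F)
    (hx : x ∈ U) (hy : y ≠ 0) (k : Fin n) :
    dx F k x y = dy (projFactor F) k x y * F x y
      + projFactor F x y * dy F k x y := by
  rw [hamel_E1 hF hpf hx hy k,
    dy_mul (diffY hF.admP hF.isOpen hx hy) (diffY hF.adm hF.isOpen hx hy)]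

end Core

section MoreRules
variable {U : Set (Fin n → ℝ)} {A B : (Fin n → ℝ) → (Fin n → ℝ) → ℝ}
  {x y : Fin n → ℝ} {k : Fin n}

lemma dy_add (hA : DifferentiableAt ℝ (A x) y) (hB : DifferentiableAt ℝ (B x) y) :
    dy (fun x' y' => A x' y' + B x' y') k x y = dy A k x y + dy B k x y := by
  simp only [dy]; rw [fderiv_fun_add hA hB]; simp

lemma dx_add (hA : DifferentiableAt ℝ (fun x' => A x' y) x)
    (hB : DifferentiableAt ℝ (fun x' => B x' y) x) :
    dx (fun x' y' => A x' y' + B x' y') k x y = dx A k x y + dx B k x y := by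
  simp only [dx]; rw [fderiv_fun_add hA hB]; simp

lemma dy_sub (hA : DifferentiableAt ℝ (A x) y) (hB : DifferentiableAt ℝ (B x) y) :
    dy (fun x' y' => A x' y' - B x' y') k x y = dy A k x y - dy B k x y := by
  simp only [dy]; rw [fderiv_fun_sub hA hB]; simp

/-- generic contraction: `∂/∂x^k (∑ y'^m g_m) = ∑ y^m ∂g_m/∂x^k`. -/
lemma dx_contract {g : Fin n → (Fin n → ℝ) → (Fin n → ℝ) → ℝ}
    (hg : ∀ m, DifferentiableAt ℝ (fun x' => g m x' y) x) (k : Fin n) :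
    dx (fun x' y' => ∑ m, y' m * g m x' y') k x y
      = ∑ m, y m * dx (g m) k x y := by
  rw [dx_sum (f := fun m x y => y m * g m x y)
    (fun m => (differentiableAt_const (y m)).mul (hg m))]
  refine Finset.sum_congr rfl fun m _ => ?_
  rw [dx_mul (A := fun _ y' => y' m) (B := g m) (differentiableAt_const (y m)) (hg m),
    dx_coord0]
  ring

end MoreRules

section E2
variable {U : Set (Fin n → ℝ)} {F : (Fin n → ℝ) → (Fin n → ℝ) → ℝ} {x y : Fin n → ℝ}

lemma contract_dxdy (hF : IsFinslerMetric U F) (hpf : IsProjFlat U F)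
    (hx : x ∈ U) (hy : y ≠ 0) (k : Fin n) :
    ∑ m, y m * dx (dy F k) m x y = dx F k x y := by
  have hU := hF.isOpen
  rw [Finset.sum_congr rfl fun m _ => by rw [hpf x hx y hy k m]]
  rw [← dx_contract (g := fun m => dy F m)
    (fun m => diffX (hF.adm.dy hU m) hU hx hy) k]
  exact dx_congr hU (fun x' hx' => eulerF hF hx' hy) hx k

lemma X_eq (hF : IsFinslerMetric U F) (hpf : IsProjFlat U F)
    (hx : x ∈ U) (hy : y ≠ 0) (k : Fin n) :
    F x y * (∑ m, y m * dx (dy (projFactor F) k) m x y)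
      = 2 * F x y * dx (projFactor F) k x y
        - projFactor F x y * F x y * dy (projFactor F) k x y
        + (projFactor F x y * projFactor F x y
            - ∑ m, y m * dx (projFactor F) m x y) * dy F k x y := by
  have hU := hF.isOpen
  have hAm : ∀ m, dx (dx F k) m x y
      = dx (dy (projFactor F) k) m x y * F x y
        + dy (projFactor F) k x y * dx F m x y
        + dx (projFactor F) m x y * dy F k x y
        + projFactor F x y * dx (dy F k) m x y := by
    intro m
    have hcg : dx (dx F k) m x y
        = dx (fun x' y' => dy (projFactor F) k x' y' * F x' y'
            + projFactor F x' y' * dy F k x' y') m x y :=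
      dx_congr hU (fun x' hx' => by
        show dx F k x' y = _
        exact hamel_E1' hF hpf hx' hy k) hx m
    rw [hcg, dx_add ((diffX (hF.admP.dy hU k) hU hx hy).mul (diffX hF.adm hU hx hy))
        ((diffX hF.admP hU hx hy).mul (diffX (hF.adm.dy hU k) hU hx hy)),
      dx_mul (diffX (hF.admP.dy hU k) hU hx hy) (diffX hF.adm hU hx hy),
      dx_mul (diffX hF.admP hU hx hy) (diffX (hF.adm.dy hU k) hU hx hy)]
    ring
  have hsplit : ∑ m, y m * dx (dx F k) m x y
      = F x y * ∑ m, y m * dx (dy (projFactor F) k) m x y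
        + dy (projFactor F) k x y * ∑ m, y m * dx F m x y
        + (∑ m, y m * dx (projFactor F) m x y) * dy F k x y
        + projFactor F x y * ∑ m, y m * dx (dy F k) m x y := by
    simp only [Finset.mul_sum, Finset.sum_mul, ← Finset.sum_add_distrib]
    refine Finset.sum_congr rfl fun m _ => ?_
    rw [hAm m]; ring
  have hL : ∑ m, y m * dx (dx F k) m x y
      = 2 * (dx (projFactor F) k x y * F x y + projFactor F x y * dx F k x y) := by
    rw [Finset.sum_congr rfl fun m _ => by rw [schwarz_xx hF.adm hU hx hy k m]]
    rw [← dx_contract (g := fun m => dx F m)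
      (fun m => diffX (hF.adm.dx hU m) hU hx hy) k]
    have hcg : dx (fun x' y' => ∑ m, y' m * dx F m x' y') k x y
        = dx (fun x' y' => 2 * (projFactor F x' y' * F x' y')) k x y :=
      dx_congr hU (fun x' hx' => by rw [sum_dxF hF hx' hy]; ring) hx k
    rw [hcg, dx_const_mul _ ((diffX hF.admP hU hx hy).mul (diffX hF.adm hU hx hy)),
      dx_mul (diffX hF.admP hU hx hy) (diffX hF.adm hU hx hy)]
  have hC := contract_dxdy hF hpf hx hy k
  have hS := sum_dxF hF hx hy
  have hE1 := hamel_E1' hF hpf hx hy k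
  rw [hL, hS, hC] at hsplit
  linear_combination -hsplit + projFactor F x y * hE1

lemma dyQ_eq (hF : IsFinslerMetric U F) (hx : x ∈ U) (hy : y ≠ 0) (k : Fin n) :
    dy (fun x y => ∑ m, y m * dx (projFactor F) m x y) k x y
      = dx (projFactor F) k x y
        + ∑ m, y m * dx (dy (projFactor F) k) m x y := by
  have hU := hF.isOpen
  rw [dy_qform hF.admP hU hx hy k]
  congr 1
  exact Finset.sum_congr rfl fun m _ => by
    rw [← schwarz_xy hF.admP hU hx hy k m]

lemma hamel_E2 (hF : IsFinslerMetric U F) (hpf : IsProjFlat U F)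
    (hx : x ∈ U) (hy : y ≠ 0) (k : Fin n) :
    dx (projFactor F) k x y = projFactor F x y * dy (projFactor F) k x y
      - 1 / (3 * F x y)
        * dy (fun x' y' => flagCurvPF F x' y' * (F x' y') ^ 3) k x y := by
  have hU := hF.isOpen
  have hFpos := hF.pos x hx y hy
  -- rewrite K F³ as (P·P − Q)·F in the y-slice
  have hKF : dy (fun x' y' => flagCurvPF F x' y' * (F x' y') ^ 3) k x y
      = dy (fun x' y' => (projFactor F x' y' * projFactor F x' y'
          - ∑ m, y' m * dx (projFactor F) m x' y') * F x' y') k x y := by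
    refine dy_congr (fun y' hy' => ?_) hy k
    have hp := hF.pos x hx y' hy'
    simp only [flagCurvPF]
    field_simp
  have hdiffA : DifferentiableAt ℝ
      (fun y' => projFactor F x y' * projFactor F x y'
        - ∑ m, y' m * dx (projFactor F) m x y') y :=
    ((diffY hF.admP hU hx hy).mul (diffY hF.admP hU hx hy)).sub
      (diffY (adm_qform hF.admP hU) hU hx hy)
  have hexp : dy (fun x' y' => (projFactor F x' y' * projFactor F x' y'
          - ∑ m, y' m * dx (projFactor F) m x' y') * F x' y') k x y
      = (dy (projFactor F) k x y * projFactor F x y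
          + projFactor F x y * dy (projFactor F) k x y
          - dy (fun x y => ∑ m, y m * dx (projFactor F) m x y) k x y) * F x y
        + (projFactor F x y * projFactor F x y
            - ∑ m, y m * dx (projFactor F) m x y) * dy F k x y := by
    rw [dy_mul (A := fun x' y' => projFactor F x' y' * projFactor F x' y'
          - ∑ m, y' m * dx (projFactor F) m x' y') (B := F) hdiffA
        (diffY hF.adm hU hx hy),
      dy_sub ((diffY hF.admP hU hx hy).mul (diffY hF.admP hU hx hy))
        (diffY (adm_qform hF.admP hU) hU hx hy),
      dy_mul (diffY hF.admP hU hx hy) (diffY hF.admP hU hx hy)]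
  have hQ := dyQ_eq hF hx hy k
  have hX := X_eq hF hpf hx hy k
  have hval : dy (fun x' y' => flagCurvPF F x' y' * (F x' y') ^ 3) k x y
      = 3 * F x y * (projFactor F x y * dy (projFactor F) k x y
          - dx (projFactor F) k x y) := by
    rw [hKF, hexp, hQ]
    linear_combination - hX
  rw [hval]
  field_simp
  ring
end E2

section Final
variable {U : Set (Fin n → ℝ)} {F : (Fin n → ℝ) → (Fin n → ℝ) → ℝ} {x y : Fin n → ℝ}

lemma IsFinslerMetric.admK (hF : IsFinslerMetric U F) : Adm U (flagCurvPF F) := by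
  have hU := hF.isOpen
  refine ContDiffOn.div ?_ (hF.adm.pow 2) ?_
  · exact (hF.admP.pow 2).sub (adm_qform hF.admP hU)
  · rintro ⟨x, y⟩ ⟨hx, hy⟩
    have := hF.pos x hx y hy
    positivity

lemma flagCurv_homog (hF : IsFinslerMetric U F) (hx : x ∈ U) (hy : y ≠ 0)
    {c : ℝ} (hc : 0 < c) :
    flagCurvPF F x (c • y) = flagCurvPF F x y := by
  have hU := hF.isOpen
  have hP := projFactor_homog hF hx hy hc
  have hdxP : ∀ m, dx (projFactor F) m x (c • y) = c * dx (projFactor F) m x y := by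
    intro m
    have := dx_homog hF.admP hU hx hy hc 1
      (fun x' hx' => by rw [pow_one]; exact projFactor_homog hF hx' hy hc) m
    simpa using this
  have hFc : F x (c • y) = c * F x y := hF.homog x hx y c hc
  have hFpos := hF.pos x hx y hy
  simp only [flagCurvPF, Pi.smul_apply, smul_eq_mul, hP, hFc, hdxP]
  rw [show ∑ m, c * y m * (c * dx (projFactor F) m x y)
      = c ^ 2 * ∑ m, y m * dx (projFactor F) m x y by
    rw [Finset.mul_sum]; exact Finset.sum_congr rfl fun m _ => by ring]
  have hc0 : c ≠ 0 := ne_of_gt hc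
  field_simp

lemma converse_projflat (hF : IsFinslerMetric U F)
    {P : (Fin n → ℝ) → (Fin n → ℝ) → ℝ}
    (hPsm : ContDiffOn ℝ (⊤ : ℕ∞) (fun p : (Fin n → ℝ) × (Fin n → ℝ) => P p.1 p.2)
      (U ×ˢ {y : Fin n → ℝ | y ≠ 0}))
    (hE1 : ∀ x ∈ U, ∀ y : Fin n → ℝ, y ≠ 0 → ∀ k : Fin n,
      dx F k x y = dy (fun x' y' => P x' y' * F x' y') k x y) :
    IsProjFlat U F := by
  intro x hx y hy k l
  have hU := hF.isOpen
  have hG : Adm U (fun x y => P x y * F x y) := ContDiffOn.mul hPsm hF.adm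
  have h1 : dx (dy F k) l x y = dy (dx F l) k x y := schwarz_xy hF.adm hU hx hy k l
  have h2 : dy (dx F l) k x y
      = dy (dy (fun x' y' => P x' y' * F x' y') l) k x y :=
    dy_congr (fun y' hy' => hE1 x hx y' hy' l) hy k
  have h3 : dy (dy (fun x' y' => P x' y' * F x' y') l) k x y
      = dy (dy (fun x' y' => P x' y' * F x' y') k) l x y :=
    (schwarz_yy hG hU hx hy k l).symm
  have h4 : dy (dy (fun x' y' => P x' y' * F x' y') k) l x y
      = dy (dx F k) l x y :=
    (dy_congr (fun y' hy' => hE1 x hx y' hy' k) hy l).symm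
  have h5 : dx (dy F l) k x y = dy (dx F k) l x y := schwarz_xy hF.adm hU hx hy l k
  rw [h1, h2, h3, h4, ← h5]

lemma unique_P (hF : IsFinslerMetric U F)
    {P : (Fin n → ℝ) → (Fin n → ℝ) → ℝ}
    (hPsm : ContDiffOn ℝ (⊤ : ℕ∞) (fun p : (Fin n → ℝ) × (Fin n → ℝ) => P p.1 p.2)
      (U ×ˢ {y : Fin n → ℝ | y ≠ 0}))
    (hPhom : ∀ x ∈ U, ∀ y : Fin n → ℝ, y ≠ 0 → ∀ c : ℝ, 0 < c →
      P x (c • y) = c * P x y)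
    (hE1 : ∀ x ∈ U, ∀ y : Fin n → ℝ, y ≠ 0 → ∀ k : Fin n,
      dx F k x y = dy (fun x' y' => P x' y' * F x' y') k x y)
    (hx : x ∈ U) (hy : y ≠ 0) : P x y = projFactor F x y := by
  have hU := hF.isOpen
  have hG : Adm U (fun x y => P x y * F x y) := ContDiffOn.mul hPsm hF.adm
  have heuler : ∑ k, y k * dy (fun x' y' => P x' y' * F x' y') k x y
      = 2 * (P x y * F x y) := by
    have := eulerY (T := fun x y => P x y * F x y) (x := x) (y := y) 2
      (diffY hG hU hx hy) (fun c hc => by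
        show P x (c • y) * F x (c • y) = _
        rw [hPhom x hx y hy c hc, hF.homog x hx y c hc]; ring)
    rw [this]; norm_num
  have hs : ∑ k, y k * dx F k x y = 2 * (P x y * F x y) := by
    rw [Finset.sum_congr rfl (fun k _ => by rw [hE1 x hx y hy k])]
    exact heuler
  have hs2 := sum_dxF hF hx hy
  have hFpos := hF.pos x hx y hy
  have h := hs.symm.trans hs2
  have h2 : P x y * F x y = projFactor F x y * F x y := by linarith
  exact mul_right_cancel₀ (ne_of_gt hFpos) h2

end Final

end BerwaldAux

/-- Berwald's characterization. `F` is projectively flat iff there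
exist `P` (degree 1 homogeneous) and `K` (degree 0 homogeneous), smooth on
`U × (ℝⁿ∖{0})`, with `F_{x^k} = (PF)_{y^k}` and
`P_{x^k} = P P_{y^k} − (1/(3F)) (K F³)_{y^k}`; in this case `P` is the projective
factor of `F`. -/
theorem projflat_iff_berwald_system
    {n : ℕ} {U : Set (Fin n → ℝ)}
    {F : (Fin n → ℝ) → (Fin n → ℝ) → ℝ} (hF : IsFinslerMetric U F) :
    (IsProjFlat U F ↔
      ∃ P K : (Fin n → ℝ) → (Fin n → ℝ) → ℝ,
        ContDiffOn ℝ (⊤ : ℕ∞) (fun p : (Fin n → ℝ) × (Fin n → ℝ) => P p.1 p.2)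
          (U ×ˢ {y : Fin n → ℝ | y ≠ 0}) ∧
        ContDiffOn ℝ (⊤ : ℕ∞) (fun p : (Fin n → ℝ) × (Fin n → ℝ) => K p.1 p.2)
          (U ×ˢ {y : Fin n → ℝ | y ≠ 0}) ∧
        (∀ x ∈ U, ∀ y : Fin n → ℝ, y ≠ 0 → ∀ c : ℝ, 0 < c →
          P x (c • y) = c * P x y) ∧
        (∀ x ∈ U, ∀ y : Fin n → ℝ, y ≠ 0 → ∀ c : ℝ, 0 < c →
          K x (c • y) = K x y) ∧
        (∀ x ∈ U, ∀ y : Fin n → ℝ, y ≠ 0 → ∀ k : Fin n,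
          dx F k x y = dy (fun x' y' => P x' y' * F x' y') k x y) ∧
        (∀ x ∈ U, ∀ y : Fin n → ℝ, y ≠ 0 → ∀ k : Fin n,
          dx P k x y = P x y * dy P k x y
            - 1 / (3 * F x y) * dy (fun x' y' => K x' y' * (F x' y') ^ 3) k x y)) ∧
    (∀ P K : (Fin n → ℝ) → (Fin n → ℝ) → ℝ,
        ContDiffOn ℝ (⊤ : ℕ∞) (fun p : (Fin n → ℝ) × (Fin n → ℝ) => P p.1 p.2)
          (U ×ˢ {y : Fin n → ℝ | y ≠ 0}) →
        ContDiffOn ℝ (⊤ : ℕ∞) (fun p : (Fin n → ℝ) × (Fin n → ℝ) => K p.1 p.2)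
          (U ×ˢ {y : Fin n → ℝ | y ≠ 0}) →
        (∀ x ∈ U, ∀ y : Fin n → ℝ, y ≠ 0 → ∀ c : ℝ, 0 < c →
          P x (c • y) = c * P x y) →
        (∀ x ∈ U, ∀ y : Fin n → ℝ, y ≠ 0 → ∀ c : ℝ, 0 < c →
          K x (c • y) = K x y) →
        (∀ x ∈ U, ∀ y : Fin n → ℝ, y ≠ 0 → ∀ k : Fin n,
          dx F k x y = dy (fun x' y' => P x' y' * F x' y') k x y) →
        (∀ x ∈ U, ∀ y : Fin n → ℝ, y ≠ 0 → ∀ k : Fin n,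
          dx P k x y = P x y * dy P k x y
            - 1 / (3 * F x y) * dy (fun x' y' => K x' y' * (F x' y') ^ 3) k x y) →
        ∀ x ∈ U, ∀ y : Fin n → ℝ, y ≠ 0 → P x y = projFactor F x y) := by
  constructor
  · constructor
    · intro hpf
      refine ⟨projFactor F, flagCurvPF F, hF.admP, hF.admK,
        (fun x hx y hy c hc => projFactor_homog hF hx hy hc),
        (fun x hx y hy c hc => flagCurv_homog hF hx hy hc),
        (fun x hx y hy k => hamel_E1 hF hpf hx hy k),
        (fun x hx y hy k => hamel_E2 hF hpf hx hy k)⟩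
    · rintro ⟨P, K, hPsm, hKsm, hPhom, hKhom, hE1, hE2⟩
      exact converse_projflat hF hPsm hE1
  · intro P K hPsm hKsm hPhom hKhom hE1 hE2 x hx y hy
    exact unique_P hF hPsm hPhom hE1 hx hy
end
end

section
/- Let F be a projectively flat Finsler metric on an open set U ⊆ ℝⁿ, with projective factor P := (y^m ∂F/∂x^m)/(2F) and flag curvature K := (P² − y^m ∂P/∂x^m)/F². Then for all k, l: (F/3)(K_{·l}P_{·k} − K_{·k}P_{·l}) + P(K_{·l}F_{·k} − K_{·k}F_{·l}) + K_{x^k}F_{·l} − K_{x^l}F_{·k} + (F/3)(K_{·l x^k} − K_{·k x^l}) = 0, where subscripts ·k and x^k denote ∂/∂y^k and ∂/∂x^k respectively. -/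
open MeasureTheory

noncomputable section

variable {n : ℕ}

namespace PFX
variable {n : ℕ}
abbrev EE (n : ℕ) := (Fin n → ℝ) × (Fin n → ℝ)
def ee (k : Fin n) : Fin n → ℝ := Pi.single k 1
def vx (k : Fin n) : EE n := (ee k, 0)
def vy (k : Fin n) : EE n := (0, ee k)
def D (f : EE n → ℝ) (v : EE n) (p : EE n) : ℝ := fderiv ℝ f p v

theorem one_le_top : (1:WithTop ℕ∞) ≤ ((⊤:ℕ∞):WithTop ℕ∞) := by exact_mod_cast le_top
theorem two_le_top : (2:WithTop ℕ∞) ≤ ((⊤:ℕ∞):WithTop ℕ∞) := by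
  have : ((2:ℕ∞):WithTop ℕ∞) = (2:WithTop ℕ∞) := by norm_cast
  rw [← this]; exact_mod_cast (le_top : (2:ℕ∞) ≤ ⊤)
theorem top_add_one : ((⊤:ℕ∞):WithTop ℕ∞)+1 ≤ ((⊤:ℕ∞):WithTop ℕ∞) := by
  exact_mod_cast (le_refl (⊤:ℕ∞))

theorem D_congr {f g : EE n → ℝ} {p : EE n} (h : f =ᶠ[nhds p] g) (v : EE n) :
    D f v p = D g v p := by unfold D; rw [h.fderiv_eq]

theorem D_congrOn {f g : EE n → ℝ} {s : Set (EE n)} (hs : IsOpen s)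
    (h : ∀ q ∈ s, f q = g q) {p : EE n} (hp : p ∈ s) (v : EE n) :
    D f v p = D g v p :=
  D_congr (Filter.eventuallyEq_of_mem (hs.mem_nhds hp) h) v

theorem diffAt {G : Type*} [NormedAddCommGroup G] [NormedSpace ℝ G]
    {f : EE n → G} {s : Set (EE n)} (hs : IsOpen s)
    (hf : ContDiffOn ℝ (⊤ : ℕ∞) f s) {p : EE n} (hp : p ∈ s) :
    DifferentiableAt ℝ f p :=
  ((hf.differentiableOn (by simp)).differentiableAt (hs.mem_nhds hp))

theorem smooth_fderiv {f : EE n → ℝ} {s : Set (EE n)} (hs : IsOpen s)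
    (hf : ContDiffOn ℝ (⊤ : ℕ∞) f s) :
    ContDiffOn ℝ (⊤ : ℕ∞) (fderiv ℝ f) s :=
  hf.fderiv_of_isOpen hs top_add_one

theorem smooth_D {f : EE n → ℝ} {s : Set (EE n)} (hs : IsOpen s)
    (hf : ContDiffOn ℝ (⊤ : ℕ∞) f s) (v : EE n) :
    ContDiffOn ℝ (⊤ : ℕ∞) (D f v) s :=
  (smooth_fderiv hs hf).clm_apply contDiffOn_const

theorem D_symm {f : EE n → ℝ} {s : Set (EE n)} (hs : IsOpen s)
    (hf : ContDiffOn ℝ (⊤ : ℕ∞) f s) {p : EE n} (hp : p ∈ s) (v w : EE n) :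
    D (D f v) w p = D (D f w) v p := by
  have hmem := hs.mem_nhds hp
  have hca : ContDiffAt ℝ (⊤ : ℕ∞) f p := hf.contDiffAt hmem
  have hsymm : IsSymmSndFDerivAt ℝ f p := hca.isSymmSndFDerivAt (by rw [minSmoothness_of_isRCLikeNormedField]; exact two_le_top)
  have hd : DifferentiableAt ℝ (fderiv ℝ f) p := diffAt hs (smooth_fderiv hs hf) hp
  have key : ∀ u z : EE n, D (D f u) z p = fderiv ℝ (fderiv ℝ f) p z u := by
    intro u z
    unfold D
    rw [fderiv_clm_apply hd (differentiableAt_const u)]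
    simp
  rw [key, key, hsymm.eq]

theorem D_mul {f g : EE n → ℝ} {p : EE n} (hf : DifferentiableAt ℝ f p)
    (hg : DifferentiableAt ℝ g p) (v : EE n) :
    D (fun q => f q * g q) v p = D f v p * g p + f p * D g v p := by
  unfold D; rw [fderiv_fun_mul hf hg]; simp [smul_eq_mul]; ring

theorem D_add {f g : EE n → ℝ} {p : EE n} (hf : DifferentiableAt ℝ f p)
    (hg : DifferentiableAt ℝ g p) (v : EE n) :
    D (fun q => f q + g q) v p = D f v p + D g v p := by
  unfold D; rw [fderiv_fun_add hf hg]; simp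

theorem D_sub {f g : EE n → ℝ} {p : EE n} (hf : DifferentiableAt ℝ f p)
    (hg : DifferentiableAt ℝ g p) (v : EE n) :
    D (fun q => f q - g q) v p = D f v p - D g v p := by
  unfold D; rw [fderiv_fun_sub hf hg]; simp

theorem D_const_mul {f : EE n → ℝ} {p : EE n} (hf : DifferentiableAt ℝ f p)
    (c : ℝ) (v : EE n) :
    D (fun q => c * f q) v p = c * D f v p := by
  unfold D; rw [fderiv_const_mul hf c]; simp

theorem D_pow2 {f : EE n → ℝ} {p : EE n} (hf : DifferentiableAt ℝ f p) (v : EE n) :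
    D (fun q => f q ^ 2) v p = 2 * f p * D f v p := by
  have h : (fun q => f q ^ 2) = fun q => f q * f q := by funext q; ring
  rw [h, D_mul hf hf]; ring

theorem D_sum {ι : Type*} {u : Finset ι} {f : ι → EE n → ℝ} {p : EE n}
    (hf : ∀ i ∈ u, DifferentiableAt ℝ (f i) p) (v : EE n) :
    D (fun q => ∑ i ∈ u, f i q) v p = ∑ i ∈ u, D (f i) v p := by
  unfold D; rw [fderiv_fun_sum hf]; simp

theorem diffAt_coord2 (m : Fin n) (p : EE n) :
    DifferentiableAt ℝ (fun q : EE n => q.2 m) p :=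
  ((ContinuousLinearMap.proj m).comp (ContinuousLinearMap.snd ℝ (Fin n → ℝ) (Fin n → ℝ))).differentiableAt

theorem smooth_coord2 (m : Fin n) {s : Set (EE n)} :
    ContDiffOn ℝ (⊤ : ℕ∞) (fun q : EE n => q.2 m) s :=
  (((ContinuousLinearMap.proj m).comp (ContinuousLinearMap.snd ℝ (Fin n → ℝ) (Fin n → ℝ))).contDiff).contDiffOn

theorem D_coord2 (m : Fin n) (v p : EE n) :
    D (fun q : EE n => q.2 m) v p = v.2 m := by
  unfold D
  rw [show (fun q : EE n => q.2 m) = ⇑((ContinuousLinearMap.proj m).comp (ContinuousLinearMap.snd ℝ (Fin n → ℝ) (Fin n → ℝ))) from rfl,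
    ContinuousLinearMap.fderiv]
  rfl

theorem sum_smul_vy (y : Fin n → ℝ) :
    ((0, y) : EE n) = ∑ l, y l • vy l := by
  have h2 : y = ∑ l, y l • (ee l : Fin n → ℝ) := by
    funext j
    simp [ee, Finset.sum_apply, Pi.single_apply]
  refine Prod.ext ?_ ?_
  · rw [Prod.fst_sum]; simp [vy]
  · rw [Prod.snd_sum]; simp only [vy, Prod.smul_mk, smul_zero]; exact h2

theorem sum_ee_mul (k : Fin n) (g : Fin n → ℝ) : ∑ l, ee k l * g l = g k := by
  simp [ee, Pi.single_apply]

theorem vx_snd (k l : Fin n) : (vx k).2 l = 0 := rfl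
theorem vy_snd (k l : Fin n) : (vy k).2 l = ee k l := rfl

/-- contracted derivative: `D (∑ y^l f_l) v = ∑ (v^l f_l + y^l D f_l v)`. -/
theorem D_contract {f : Fin n → EE n → ℝ} {p : EE n}
    (hf : ∀ l, DifferentiableAt ℝ (f l) p) (v : EE n) :
    D (fun q => ∑ l, q.2 l * f l q) v p
      = ∑ l, (v.2 l * f l p + p.2 l * D (f l) v p) := by
  rw [show (fun q => ∑ l, q.2 l * f l q)
      = fun q => ∑ l, (fun q' => q'.2 l * f l q') q from rfl,
    D_sum (fun l _ => (diffAt_coord2 l p).fun_mul (hf l))]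
  exact Finset.sum_congr rfl fun l _ => by
    rw [D_mul (diffAt_coord2 l p) (hf l), D_coord2]

theorem euler {f : EE n → ℝ} {s : Set (EE n)} (hs : IsOpen s)
    {p : EE n} (hp : p ∈ s) (hd : DifferentiableAt ℝ f p)
    (hhom : ∀ q ∈ s, ∀ c : ℝ, 0 < c → f (q.1, c • q.2) = c * f q) :
    ∑ l, p.2 l * D f (vy l) p = f p := by
  have key : fderiv ℝ f p ((0 : Fin n → ℝ), p.2) = f p := by
    have hφ : HasDerivAt (fun c : ℝ => ((p.1, c • p.2) : EE n))
        (((0 : Fin n → ℝ), p.2) : EE n) 1 := by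
      have h2 : HasDerivAt (fun c : ℝ => c • p.2) ((1:ℝ) • p.2) 1 :=
        (hasDerivAt_id 1).smul_const p.2
      simpa using (hasDerivAt_const (1:ℝ) p.1).prodMk h2
    have hp1 : ((p.1, (1:ℝ) • p.2) : EE n) = p := by simp
    have hfd1 : HasFDerivAt f (fderiv ℝ f p) ((p.1, (1:ℝ) • p.2) : EE n) := by
      rw [hp1]; exact hd.hasFDerivAt
    have hcomp : HasDerivAt (fun c : ℝ => f (p.1, c • p.2))
        (fderiv ℝ f p ((0 : Fin n → ℝ), p.2)) 1 := hfd1.comp_hasDerivAt 1 hφ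
    have hev : (fun c : ℝ => f (p.1, c • p.2)) =ᶠ[nhds 1] fun c => c * f p := by
      have h01 : Set.Ioi (0:ℝ) ∈ nhds (1:ℝ) := isOpen_Ioi.mem_nhds (by norm_num)
      filter_upwards [h01] with c hc
      exact hhom p hp c hc
    have hcomp2 : HasDerivAt (fun c : ℝ => c * f p) (fderiv ℝ f p ((0 : Fin n → ℝ), p.2)) 1 :=
      hcomp.congr_of_eventuallyEq hev.symm
    have := (hasDerivAt_mul_const (f p)).unique hcomp2
    simpa using this.symm
  rw [sum_smul_vy p.2] at key
  rw [map_sum] at key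
  simp only [_root_.map_smul, smul_eq_mul] at key
  exact key

def scaleL (c : ℝ) : EE n →L[ℝ] EE n :=
  (ContinuousLinearMap.fst ℝ (Fin n → ℝ) (Fin n → ℝ)).prod
    (c • ContinuousLinearMap.snd ℝ (Fin n → ℝ) (Fin n → ℝ))

theorem D_scale {f : EE n → ℝ} {s : Set (EE n)} (hs : IsOpen s)
    {p : EE n} (hp : p ∈ s) {c : ℝ}
    (hfd : DifferentiableAt ℝ f (p.1, c • p.2)) (hfd' : DifferentiableAt ℝ f p)
    (hev : ∀ q ∈ s, f (q.1, c • q.2) = c * f q) (v : EE n) :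
    D f (v.1, c • v.2) (p.1, c • p.2) = c * D f v p := by
  have hev' : (f ∘ scaleL (n := n) c) =ᶠ[nhds p] fun q => c * f q := by
    filter_upwards [hs.mem_nhds hp] with q hq
    exact hev q hq
  have hfd2 : HasFDerivAt f (fderiv ℝ f (scaleL c p)) (scaleL c p) := by
    have : scaleL c p = ((p.1, c • p.2) : EE n) := rfl
    rw [this]; exact hfd.hasFDerivAt
  have hL2 : HasFDerivAt (scaleL (n := n) c) (scaleL (n := n) c) p :=
    (scaleL (n := n) c).hasFDerivAt
  have hchain : fderiv ℝ (f ∘ scaleL (n := n) c) p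
      = (fderiv ℝ f (scaleL c p)).comp (scaleL c) :=
    HasFDerivAt.fderiv (HasFDerivAt.comp p hfd2 hL2)
  have hconst : fderiv ℝ (fun q : EE n => c * f q) p = c • fderiv ℝ f p :=
    fderiv_const_mul hfd' c
  have h := hev'.fderiv_eq (𝕜 := ℝ)
  rw [hchain, hconst] at h
  have happ := congrArg (fun (L : EE n →L[ℝ] ℝ) => L v) h
  simp only [ContinuousLinearMap.comp_apply, ContinuousLinearMap.smul_apply,
    smul_eq_mul] at happ
  unfold D
  rw [show ((p.1, c • p.2) : EE n) = scaleL c p from rfl,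
    show ((v.1, c • v.2) : EE n) = scaleL c v from rfl]
  exact happ


def Pf (A : EE n → ℝ) (q : EE n) : ℝ := (∑ m, q.2 m * D A (vx m) q) / (2 * A q)
def Qf (A : EE n → ℝ) (q : EE n) : ℝ := ∑ m, q.2 m * D (Pf A) (vx m) q
def Kf (A : EE n → ℝ) (q : EE n) : ℝ := ((Pf A q)^2 - Qf A q) / (A q)^2

section Master

variable {A : EE n → ℝ} {s : Set (EE n)}

theorem smooth_Pf (hs : IsOpen s) (hA : ContDiffOn ℝ (⊤:ℕ∞) A s)
    (hpos : ∀ p ∈ s, 0 < A p) : ContDiffOn ℝ (⊤:ℕ∞) (Pf A) s := by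
  apply ContDiffOn.div
  · exact ContDiffOn.sum fun m _ => (smooth_coord2 m).mul (smooth_D hs hA (vx m))
  · exact contDiffOn_const.mul hA
  · intro q hq; have := hpos q hq; positivity

theorem smooth_Qf (hs : IsOpen s) (hA : ContDiffOn ℝ (⊤:ℕ∞) A s)
    (hpos : ∀ p ∈ s, 0 < A p) : ContDiffOn ℝ (⊤:ℕ∞) (Qf A) s :=
  ContDiffOn.sum fun m _ =>
    (smooth_coord2 m).mul (smooth_D hs (smooth_Pf hs hA hpos) (vx m))

theorem smooth_Kf (hs : IsOpen s) (hA : ContDiffOn ℝ (⊤:ℕ∞) A s)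
    (hpos : ∀ p ∈ s, 0 < A p) : ContDiffOn ℝ (⊤:ℕ∞) (Kf A) s := by
  apply ContDiffOn.div
  · exact ((smooth_Pf hs hA hpos).pow 2).sub (smooth_Qf hs hA hpos)
  · exact hA.pow 2
  · intro q hq; have := hpos q hq; positivity

theorem N1 (hpos : ∀ p ∈ s, 0 < A p) {q : EE n} (hq : q ∈ s) :
    ∑ m, q.2 m * D A (vx m) q = 2 * (Pf A q * A q) := by
  have h := (hpos q hq).ne'
  unfold Pf; field_simp

theorem N2 (hpos : ∀ p ∈ s, 0 < A p) {q : EE n} (hq : q ∈ s) :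
    Qf A q = (Pf A q)^2 - Kf A q * (A q)^2 := by
  have h := (hpos q hq).ne'
  unfold Kf; field_simp
  ring

theorem homog_DxA (hs : IsOpen s) (hA : ContDiffOn ℝ (⊤:ℕ∞) A s)
    (hinv : ∀ p ∈ s, ∀ c : ℝ, 0 < c → ((p.1, c • p.2) : EE n) ∈ s)
    (hhom : ∀ p ∈ s, ∀ c : ℝ, 0 < c → A (p.1, c • p.2) = c * A p)
    {q : EE n} (hq : q ∈ s) {c : ℝ} (hc : 0 < c) (m : Fin n) :
    D A (vx m) (q.1, c • q.2) = c * D A (vx m) q := by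
  have h := D_scale hs hq (diffAt hs hA (hinv q hq c hc)) (diffAt hs hA hq)
    (fun r hr => hhom r hr c hc) (vx m)
  rwa [show (((vx m).1, c • (vx m).2) : EE n) = vx m by simp [vx]] at h

theorem homog_Pf (hs : IsOpen s) (hA : ContDiffOn ℝ (⊤:ℕ∞) A s)
    (hpos : ∀ p ∈ s, 0 < A p)
    (hinv : ∀ p ∈ s, ∀ c : ℝ, 0 < c → ((p.1, c • p.2) : EE n) ∈ s)
    (hhom : ∀ p ∈ s, ∀ c : ℝ, 0 < c → A (p.1, c • p.2) = c * A p) :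
    ∀ q ∈ s, ∀ c : ℝ, 0 < c → Pf A (q.1, c • q.2) = c * Pf A q := by
  intro q hq c hc
  have hnum : ∑ m, (c • q.2) m * D A (vx m) (q.1, c • q.2)
      = c^2 * ∑ m, q.2 m * D A (vx m) q := by
    rw [Finset.mul_sum]
    refine Finset.sum_congr rfl fun m _ => ?_
    rw [homog_DxA hs hA hinv hhom hq hc m]
    simp [smul_eq_mul]; ring
  have hA0 := (hpos q hq).ne'
  have hc0 := hc.ne'
  unfold Pf
  rw [show ((q.1, c • q.2) : EE n).2 = c • q.2 from rfl,
    show ((q.1, c • q.2) : EE n).1 = q.1 from rfl] at *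
  rw [hnum, hhom q hq c hc]
  field_simp

theorem eulerA (hs : IsOpen s) (hA : ContDiffOn ℝ (⊤:ℕ∞) A s)
    (hhom : ∀ p ∈ s, ∀ c : ℝ, 0 < c → A (p.1, c • p.2) = c * A p) :
    ∀ q ∈ s, ∑ l, q.2 l * D A (vy l) q = A q :=
  fun q hq => euler hs hq (diffAt hs hA hq) hhom

theorem eulerP (hs : IsOpen s) (hA : ContDiffOn ℝ (⊤:ℕ∞) A s)
    (hpos : ∀ p ∈ s, 0 < A p)
    (hinv : ∀ p ∈ s, ∀ c : ℝ, 0 < c → ((p.1, c • p.2) : EE n) ∈ s)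
    (hhom : ∀ p ∈ s, ∀ c : ℝ, 0 < c → A (p.1, c • p.2) = c * A p) :
    ∀ q ∈ s, ∑ l, q.2 l * D (Pf A) (vy l) q = Pf A q :=
  fun q hq => euler hs hq (diffAt hs (smooth_Pf hs hA hpos) hq)
    (homog_Pf hs hA hpos hinv hhom)

theorem step1 (hs : IsOpen s) (hA : ContDiffOn ℝ (⊤:ℕ∞) A s)
    (hpos : ∀ p ∈ s, 0 < A p)
    (hhom : ∀ p ∈ s, ∀ c : ℝ, 0 < c → A (p.1, c • p.2) = c * A p)
    (hHam : ∀ p ∈ s, ∀ k l : Fin n, D (D A (vy k)) (vx l) p = D (D A (vy l)) (vx k) p)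
    {p : EE n} (hp : p ∈ s) (k : Fin n) :
    D A (vx k) p = D (Pf A) (vy k) p * A p + Pf A p * D A (vy k) p := by
  have dAy : ∀ l, DifferentiableAt ℝ (D A (vy l)) p :=
    fun l => diffAt hs (smooth_D hs hA (vy l)) hp
  have dAx : ∀ l, DifferentiableAt ℝ (D A (vx l)) p :=
    fun l => diffAt hs (smooth_D hs hA (vx l)) hp
  have dA : DifferentiableAt ℝ A p := diffAt hs hA hp
  have dPf : DifferentiableAt ℝ (Pf A) p := diffAt hs (smooth_Pf hs hA hpos) hp
  -- contraction of Hamel with y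
  have e1 : ∑ l, p.2 l * D (D A (vy l)) (vx k) p = D A (vx k) p := by
    have hcg : D (fun q => ∑ l, q.2 l * D A (vy l) q) (vx k) p = D A (vx k) p :=
      D_congrOn hs (fun q hq => eulerA hs hA hhom q hq) hp (vx k)
    rw [D_contract (f := fun l => D A (vy l)) dAy (vx k)] at hcg
    simpa [vx_snd] using hcg
  have e3 : ∑ l, p.2 l * D (D A (vx l)) (vy k) p = D A (vx k) p := by
    rw [← e1]
    refine Finset.sum_congr rfl fun l _ => ?_
    rw [hHam p hp l k, D_symm hs hA hp (vx l) (vy k)]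
  -- the y-derivative of  Σ y^l A_{x^l} = 2 P A
  have e4 : D (fun q => ∑ l, q.2 l * D A (vx l) q) (vy k) p
      = D (fun q => 2 * (Pf A q * A q)) (vy k) p :=
    D_congrOn hs (fun q hq => N1 hpos hq) hp (vy k)
  have e5 : D (fun q => 2 * (Pf A q * A q)) (vy k) p
      = 2 * (D (Pf A) (vy k) p * A p + Pf A p * D A (vy k) p) := by
    rw [D_const_mul (dPf.fun_mul dA) 2, D_mul dPf dA]
  have e6 : D (fun q => ∑ l, q.2 l * D A (vx l) q) (vy k) p
      = D A (vx k) p + ∑ l, p.2 l * D (D A (vx l)) (vy k) p := by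
    rw [D_contract (f := fun l => D A (vx l)) dAx (vy k)]
    rw [Finset.sum_add_distrib]
    congr 1
    simp only [vy_snd]
    exact sum_ee_mul k _
  rw [e4, e5, e3] at e6
  linarith


theorem D_pow3 {f : EE n → ℝ} {p : EE n} (hf : DifferentiableAt ℝ f p) (v : EE n) :
    D (fun q => f q ^ 3) v p = 3 * f p ^ 2 * D f v p := by
  have h : (fun q => f q ^ 3) = fun q => f q * (f q * f q) := by funext q; ring
  rw [h, D_mul hf (hf.fun_mul hf), D_mul hf hf]; ring

theorem step2 (hs : IsOpen s) (hA : ContDiffOn ℝ (⊤:ℕ∞) A s)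
    (hpos : ∀ p ∈ s, 0 < A p)
    (hhom : ∀ p ∈ s, ∀ c : ℝ, 0 < c → A (p.1, c • p.2) = c * A p)
    (hHam : ∀ p ∈ s, ∀ k l : Fin n, D (D A (vy k)) (vx l) p = D (D A (vy l)) (vx k) p)
    {p : EE n} (hp : p ∈ s) (k l : Fin n) :
    A p * (D (D (Pf A) (vy k)) (vx l) p - D (D (Pf A) (vy l)) (vx k) p)
      + Pf A p * (D (Pf A) (vy k) p * D A (vy l) p - D (Pf A) (vy l) p * D A (vy k) p)
      + D (Pf A) (vx l) p * D A (vy k) p - D (Pf A) (vx k) p * D A (vy l) p = 0 := by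
  have hPf := smooth_Pf hs hA hpos
  have dA : DifferentiableAt ℝ A p := diffAt hs hA hp
  have dP : DifferentiableAt ℝ (Pf A) p := diffAt hs hPf hp
  have dAy : ∀ m, DifferentiableAt ℝ (D A (vy m)) p :=
    fun m => diffAt hs (smooth_D hs hA (vy m)) hp
  have dPy : ∀ m, DifferentiableAt ℝ (D (Pf A) (vy m)) p :=
    fun m => diffAt hs (smooth_D hs hPf (vy m)) hp
  have expand : ∀ m j : Fin n,
      D (D A (vx m)) (vx j) p
        = D (D (Pf A) (vy m)) (vx j) p * A p + D (Pf A) (vy m) p * D A (vx j) p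
          + (D (Pf A) (vx j) p * D A (vy m) p + Pf A p * D (D A (vy m)) (vx j) p) := by
    intro m j
    have hcg : D (D A (vx m)) (vx j) p
        = D (fun q => D (Pf A) (vy m) q * A q + Pf A q * D A (vy m) q) (vx j) p :=
      D_congrOn hs (fun q hq => step1 hs hA hpos hhom hHam hq m) hp (vx j)
    rw [hcg, D_add ((dPy m).fun_mul dA) (dP.fun_mul (dAy m)), D_mul (dPy m) dA,
      D_mul dP (dAy m)]
  have h1 := expand k l
  have h2 := expand l k
  have hsym : D (D A (vx k)) (vx l) p = D (D A (vx l)) (vx k) p :=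
    D_symm hs hA hp (vx k) (vx l)
  have hAyx : D (D A (vy k)) (vx l) p = D (D A (vy l)) (vx k) p := hHam p hp k l
  have s1k := step1 hs hA hpos hhom hHam hp k
  have s1l := step1 hs hA hpos hhom hHam hp l
  rw [← hAyx] at h2
  rw [s1k] at h2
  rw [s1l] at h1
  linear_combination hsym + h2 - h1

theorem step3 (hs : IsOpen s) (hA : ContDiffOn ℝ (⊤:ℕ∞) A s)
    (hpos : ∀ p ∈ s, 0 < A p)
    (hinv : ∀ p ∈ s, ∀ c : ℝ, 0 < c → ((p.1, c • p.2) : EE n) ∈ s)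
    (hhom : ∀ p ∈ s, ∀ c : ℝ, 0 < c → A (p.1, c • p.2) = c * A p)
    (hHam : ∀ p ∈ s, ∀ k l : Fin n, D (D A (vy k)) (vx l) p = D (D A (vy l)) (vx k) p)
    {p : EE n} (hp : p ∈ s) (k : Fin n) :
    3 * (A p * D (Pf A) (vx k) p)
      = 3 * (A p * (Pf A p * D (Pf A) (vy k) p))
        - ((A p)^3 * D (Kf A) (vy k) p + 3 * (Kf A p * ((A p)^2 * D A (vy k) p))) := by
  have hPf := smooth_Pf hs hA hpos
  have hKf := smooth_Kf hs hA hpos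
  have dA : DifferentiableAt ℝ A p := diffAt hs hA hp
  have dP : DifferentiableAt ℝ (Pf A) p := diffAt hs hPf hp
  have dK : DifferentiableAt ℝ (Kf A) p := diffAt hs hKf hp
  have dPx : ∀ m, DifferentiableAt ℝ (D (Pf A) (vx m)) p :=
    fun m => diffAt hs (smooth_D hs hPf (vx m)) hp
  have dPy : ∀ m, DifferentiableAt ℝ (D (Pf A) (vy m)) p :=
    fun m => diffAt hs (smooth_D hs hPf (vy m)) hp
  -- the five contracted sums
  have SX : ∑ m, p.2 m * D (D (Pf A) (vy k)) (vx m) p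
      = D (Qf A) (vy k) p - D (Pf A) (vx k) p := by
    have hcX := D_contract (f := fun m => D (Pf A) (vx m)) dPx (vy k)
    calc ∑ m, p.2 m * D (D (Pf A) (vy k)) (vx m) p
        = ∑ m, p.2 m * D (D (Pf A) (vx m)) (vy k) p :=
          Finset.sum_congr rfl fun m _ => by rw [D_symm hs hPf hp (vy k) (vx m)]
      _ = D (Qf A) (vy k) p - D (Pf A) (vx k) p := by
          rw [show D (Qf A) (vy k) p
              = D (fun q => ∑ m, q.2 m * D (Pf A) (vx m) q) (vy k) p from rfl, hcX]
          simp only [vy_snd]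
          rw [Finset.sum_add_distrib, sum_ee_mul]
          ring
  have SY : ∑ m, p.2 m * D (D (Pf A) (vy m)) (vx k) p = D (Pf A) (vx k) p := by
    have hcY := D_contract (f := fun m => D (Pf A) (vy m)) dPy (vx k)
    have hcg : D (fun q => ∑ m, q.2 m * D (Pf A) (vy m) q) (vx k) p
        = D (Pf A) (vx k) p :=
      D_congrOn hs (fun q hq => eulerP hs hA hpos hinv hhom q hq) hp (vx k)
    rw [hcY] at hcg
    simpa [vx_snd] using hcg
  have SAy := eulerA hs hA hhom p hp
  have SPy := eulerP hs hA hpos hinv hhom p hp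
  have SPx : ∑ m, p.2 m * D (Pf A) (vx m) p = Qf A p := rfl
  -- sum the (★) identity against y
  have hsum : ∑ m, p.2 m *
      (A p * (D (D (Pf A) (vy k)) (vx m) p - D (D (Pf A) (vy m)) (vx k) p)
        + Pf A p * (D (Pf A) (vy k) p * D A (vy m) p - D (Pf A) (vy m) p * D A (vy k) p)
        + D (Pf A) (vx m) p * D A (vy k) p - D (Pf A) (vx k) p * D A (vy m) p) = 0 :=
    Finset.sum_eq_zero fun m _ => by
      rw [step2 hs hA hpos hhom hHam hp k m, mul_zero]
  have hexp : ∑ m, p.2 m *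
      (A p * (D (D (Pf A) (vy k)) (vx m) p - D (D (Pf A) (vy m)) (vx k) p)
        + Pf A p * (D (Pf A) (vy k) p * D A (vy m) p - D (Pf A) (vy m) p * D A (vy k) p)
        + D (Pf A) (vx m) p * D A (vy k) p - D (Pf A) (vx k) p * D A (vy m) p)
      = A p * ((∑ m, p.2 m * D (D (Pf A) (vy k)) (vx m) p)
            - (∑ m, p.2 m * D (D (Pf A) (vy m)) (vx k) p))
        + Pf A p * (D (Pf A) (vy k) p * (∑ m, p.2 m * D A (vy m) p)
            - (∑ m, p.2 m * D (Pf A) (vy m) p) * D A (vy k) p)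
        + (∑ m, p.2 m * D (Pf A) (vx m) p) * D A (vy k) p
        - D (Pf A) (vx k) p * (∑ m, p.2 m * D A (vy m) p) := by
    simp only [Finset.mul_sum, Finset.sum_mul, mul_sub, sub_mul, mul_add, add_mul,
      ← Finset.sum_sub_distrib, ← Finset.sum_add_distrib]
    exact Finset.sum_congr rfl fun m _ => by ring
  rw [hexp, SX, SY, SAy, SPy, SPx] at hsum
  -- expand the y-derivative of Q using K
  have hQy : D (Qf A) (vy k) p
      = 2 * Pf A p * D (Pf A) (vy k) p
        - (D (Kf A) (vy k) p * (A p)^2 + Kf A p * (2 * A p * D A (vy k) p)) := by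
    have hcg : D (Qf A) (vy k) p
        = D (fun q => (Pf A q)^2 - Kf A q * (A q)^2) (vy k) p :=
      D_congrOn hs (fun q hq => N2 hpos hq) hp (vy k)
    rw [hcg, D_sub (dP.fun_pow 2) (dK.fun_mul (dA.fun_pow 2)), D_pow2 dP,
      D_mul dK (dA.fun_pow 2), D_pow2 dA]
  have N2p := N2 hpos hp
  linear_combination -hsum + A p * hQy + D A (vy k) p * N2p

theorem master (hs : IsOpen s) (hA : ContDiffOn ℝ (⊤:ℕ∞) A s)
    (hpos : ∀ p ∈ s, 0 < A p)
    (hinv : ∀ p ∈ s, ∀ c : ℝ, 0 < c → ((p.1, c • p.2) : EE n) ∈ s)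
    (hhom : ∀ p ∈ s, ∀ c : ℝ, 0 < c → A (p.1, c • p.2) = c * A p)
    (hHam : ∀ p ∈ s, ∀ k l : Fin n, D (D A (vy k)) (vx l) p = D (D A (vy l)) (vx k) p)
    {p : EE n} (hp : p ∈ s) (k l : Fin n) :
    A p / 3 * (D (Kf A) (vy l) p * D (Pf A) (vy k) p
        - D (Kf A) (vy k) p * D (Pf A) (vy l) p)
      + Pf A p * (D (Kf A) (vy l) p * D A (vy k) p
        - D (Kf A) (vy k) p * D A (vy l) p)
      + D (Kf A) (vx k) p * D A (vy l) p
      - D (Kf A) (vx l) p * D A (vy k) p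
      + A p / 3 * (D (D (Kf A) (vy l)) (vx k) p - D (D (Kf A) (vy k)) (vx l) p) = 0 := by
  have hPf := smooth_Pf hs hA hpos
  have hKf := smooth_Kf hs hA hpos
  have dA : DifferentiableAt ℝ A p := diffAt hs hA hp
  have dP : DifferentiableAt ℝ (Pf A) p := diffAt hs hPf hp
  have dK : DifferentiableAt ℝ (Kf A) p := diffAt hs hKf hp
  have dAy : ∀ m, DifferentiableAt ℝ (D A (vy m)) p :=
    fun m => diffAt hs (smooth_D hs hA (vy m)) hp
  have dPx : ∀ m, DifferentiableAt ℝ (D (Pf A) (vx m)) p :=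
    fun m => diffAt hs (smooth_D hs hPf (vx m)) hp
  have dPy : ∀ m, DifferentiableAt ℝ (D (Pf A) (vy m)) p :=
    fun m => diffAt hs (smooth_D hs hPf (vy m)) hp
  have dKy : ∀ m, DifferentiableAt ℝ (D (Kf A) (vy m)) p :=
    fun m => diffAt hs (smooth_D hs hKf (vy m)) hp
  have hA0 := (hpos p hp).ne'
  -- pointwise divided form of step3
  have E'p : ∀ m : Fin n, D (Pf A) (vx m) p
      = Pf A p * D (Pf A) (vy m) p - (A p)^2/3 * D (Kf A) (vy m) p
        - Kf A p * (A p * D A (vy m) p) := by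
    intro m
    have h := step3 hs hA hpos hinv hhom hHam hp m
    have h2 : A p * (3 * D (Pf A) (vx m) p)
        = A p * (3 * (Pf A p * D (Pf A) (vy m) p) - ((A p)^2 * D (Kf A) (vy m) p
            + 3 * (Kf A p * (A p * D A (vy m) p)))) := by linear_combination h
    have h3 := mul_left_cancel₀ hA0 h2
    linear_combination (1/3 : ℝ) * h3
  -- derivative in x of the step3 identity
  have expand : ∀ m j : Fin n,
      3 * (D A (vx j) p * D (Pf A) (vx m) p + A p * D (D (Pf A) (vx m)) (vx j) p)
      = 3 * (D A (vx j) p * (Pf A p * D (Pf A) (vy m) p)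
          + A p * (D (Pf A) (vx j) p * D (Pf A) (vy m) p
            + Pf A p * D (D (Pf A) (vy m)) (vx j) p))
        - ((3 * A p ^ 2 * D A (vx j) p) * D (Kf A) (vy m) p
            + (A p)^3 * D (D (Kf A) (vy m)) (vx j) p
          + 3 * (D (Kf A) (vx j) p * ((A p)^2 * D A (vy m) p)
            + Kf A p * ((2 * A p * D A (vx j) p) * D A (vy m) p
              + (A p)^2 * D (D A (vy m)) (vx j) p))) := by
    intro m j
    have hcg : D (fun q => 3 * (A q * D (Pf A) (vx m) q)) (vx j) p
        = D (fun q => 3 * (A q * (Pf A q * D (Pf A) (vy m) q))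
            - ((A q)^3 * D (Kf A) (vy m) q
              + 3 * (Kf A q * ((A q)^2 * D A (vy m) q)))) (vx j) p :=
      D_congrOn hs (fun q hq => step3 hs hA hpos hinv hhom hHam hq m) hp (vx j)
    have d1 : DifferentiableAt ℝ (fun q => A q * (Pf A q * D (Pf A) (vy m) q)) p :=
      dA.mul (dP.mul (dPy m))
    have d2a : DifferentiableAt ℝ (fun q => (A q)^3 * D (Kf A) (vy m) q) p :=
      (dA.pow 3).mul (dKy m)
    have d2b : DifferentiableAt ℝ (fun q => Kf A q * ((A q)^2 * D A (vy m) q)) p :=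
      dK.mul ((dA.pow 2).mul (dAy m))
    rw [D_const_mul (dA.fun_mul (dPx m)) 3, D_mul dA (dPx m)] at hcg
    rw [D_sub (d1.const_mul 3) (d2a.fun_add (d2b.const_mul 3)),
      D_const_mul d1 3, D_mul dA (dP.fun_mul (dPy m)), D_mul dP (dPy m),
      D_add d2a (d2b.const_mul 3), D_mul (dA.fun_pow 3) (dKy m), D_pow3 dA,
      D_const_mul d2b 3, D_mul dK ((dA.fun_pow 2).fun_mul (dAy m)),
      D_mul (dA.fun_pow 2) (dAy m), D_pow2 dA] at hcg
    exact hcg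
  have h1 := expand k l
  have h2 := expand l k
  have hPxx : D (D (Pf A) (vx k)) (vx l) p = D (D (Pf A) (vx l)) (vx k) p :=
    D_symm hs hPf hp (vx k) (vx l)
  have hAyx : D (D A (vy k)) (vx l) p = D (D A (vy l)) (vx k) p := hHam p hp k l
  have star := step2 hs hA hpos hhom hHam hp k l
  have s1k := step1 hs hA hpos hhom hHam hp k
  have s1l := step1 hs hA hpos hhom hHam hp l
  rw [← hPxx, ← hAyx, s1k] at h2
  rw [s1l] at h1
  rw [E'p k] at h1 h2 star
  rw [E'p l] at h1 h2 star
  have key : (-3 : ℝ) * (A p)^2 *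
      (A p / 3 * (D (Kf A) (vy l) p * D (Pf A) (vy k) p
          - D (Kf A) (vy k) p * D (Pf A) (vy l) p)
        + Pf A p * (D (Kf A) (vy l) p * D A (vy k) p
          - D (Kf A) (vy k) p * D A (vy l) p)
        + D (Kf A) (vx k) p * D A (vy l) p
        - D (Kf A) (vx l) p * D A (vy k) p
        + A p / 3 * (D (D (Kf A) (vy l)) (vx k) p - D (D (Kf A) (vy k)) (vx l) p)) = 0 := by
    linear_combination h1 - h2 + (3 * Pf A p) * star
  have h3 : ((-3 : ℝ) * (A p)^2) ≠ 0 := by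
    intro h
    apply hA0
    have := mul_eq_zero.mp h
    rcases this with h' | h'
    · norm_num at h'
    · exact pow_eq_zero_iff (by norm_num) |>.mp h'
  exact (mul_eq_zero.mp key).resolve_left h3

end Master

theorem dy_eq {T : (Fin n → ℝ) → (Fin n → ℝ) → ℝ} {f : EE n → ℝ} {x y : Fin n → ℝ}
    (hd : DifferentiableAt ℝ f (x, y))
    (hev : (fun q : EE n => T q.1 q.2) =ᶠ[nhds ((x, y) : EE n)] f) (k : Fin n) :
    dy T k x y = D f (vy k) (x, y) := by
  have ht : Filter.Tendsto (fun y' : Fin n → ℝ => ((x, y') : EE n)) (nhds y)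
      (nhds ((x, y) : EE n)) := (continuous_const.prodMk continuous_id).tendsto y
  have hev2 : (fun y' : Fin n → ℝ => T x y') =ᶠ[nhds y] fun y' => f (x, y') :=
    hev.comp_tendsto ht
  have h2 : HasFDerivAt (fun y' : Fin n → ℝ => ((x, y') : EE n))
      (ContinuousLinearMap.inr ℝ (Fin n → ℝ) (Fin n → ℝ)) y :=
    hasFDerivAt_prodMk_right x y
  have h3 : fderiv ℝ (fun y' => f (x, y')) y
      = (fderiv ℝ f (x, y)).comp (ContinuousLinearMap.inr ℝ (Fin n → ℝ) (Fin n → ℝ)) :=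
    (hd.hasFDerivAt.comp y h2).fderiv
  show fderiv ℝ (fun y' => T x y') y (Pi.single k 1) = _
  rw [hev2.fderiv_eq (𝕜 := ℝ), h3]
  rfl

theorem dx_eq {T : (Fin n → ℝ) → (Fin n → ℝ) → ℝ} {f : EE n → ℝ} {x y : Fin n → ℝ}
    (hd : DifferentiableAt ℝ f (x, y))
    (hev : (fun q : EE n => T q.1 q.2) =ᶠ[nhds ((x, y) : EE n)] f) (k : Fin n) :
    dx T k x y = D f (vx k) (x, y) := by
  have ht : Filter.Tendsto (fun x' : Fin n → ℝ => ((x', y) : EE n)) (nhds x)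
      (nhds ((x, y) : EE n)) := (continuous_id.prodMk continuous_const).tendsto x
  have hev2 : (fun x' : Fin n → ℝ => T x' y) =ᶠ[nhds x] fun x' => f (x', y) :=
    hev.comp_tendsto ht
  have h2 : HasFDerivAt (fun x' : Fin n → ℝ => ((x', y) : EE n))
      (ContinuousLinearMap.inl ℝ (Fin n → ℝ) (Fin n → ℝ)) x :=
    hasFDerivAt_prodMk_left x y
  have h3 : fderiv ℝ (fun x' => f (x', y)) x
      = (fderiv ℝ f (x, y)).comp (ContinuousLinearMap.inl ℝ (Fin n → ℝ) (Fin n → ℝ)) :=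
    (hd.hasFDerivAt.comp x h2).fderiv
  show fderiv ℝ (fun x' => T x' y) x (Pi.single k 1) = _
  rw [hev2.fderiv_eq (𝕜 := ℝ), h3]
  rfl

end PFX

/-- Lemma 5.1. For a projectively flat Finsler metric with
projective factor `P` and flag curvature `K`:
`(F/3)(K_{·l}P_{·k} − K_{·k}P_{·l}) + P(K_{·l}F_{·k} − K_{·k}F_{·l})
 + K_{x^k}F_{·l} − K_{x^l}F_{·k} + (F/3)(K_{·l x^k} − K_{·k x^l}) = 0`. -/
theorem projflat_flag_curv_identity
    {n : ℕ} {U : Set (Fin n → ℝ)}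
    {F : (Fin n → ℝ) → (Fin n → ℝ) → ℝ} (hF : IsFinslerMetric U F)
    (hPF : IsProjFlat U F) :
    ∀ x ∈ U, ∀ y : Fin n → ℝ, y ≠ 0 → ∀ k l : Fin n,
      F x y / 3 * (dy (flagCurvPF F) l x y * dy (projFactor F) k x y
          - dy (flagCurvPF F) k x y * dy (projFactor F) l x y)
        + projFactor F x y * (dy (flagCurvPF F) l x y * dy F k x y
          - dy (flagCurvPF F) k x y * dy F l x y)
        + dx (flagCurvPF F) k x y * dy F l x y
        - dx (flagCurvPF F) l x y * dy F k x y
        + F x y / 3 * (dx (dy (flagCurvPF F) l) k x y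
          - dx (dy (flagCurvPF F) k) l x y) = 0 := by
  classical
  set s : Set (PFX.EE n) := U ×ˢ {y : Fin n → ℝ | y ≠ 0} with hsdef
  set A : PFX.EE n → ℝ := fun q => F q.1 q.2 with hAdef
  have hs : IsOpen s := hF.isOpen.prod isOpen_ne
  have hA : ContDiffOn ℝ (⊤ : ℕ∞) A s := hF.smoothOn
  have hmem : ∀ q : PFX.EE n, q ∈ s → q.1 ∈ U ∧ q.2 ≠ 0 := by
    intro q hq
    exact ⟨hq.1, hq.2⟩
  have hpos : ∀ q ∈ s, 0 < A q := fun q hq => hF.pos q.1 (hmem q hq).1 q.2 (hmem q hq).2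
  have hinv : ∀ q ∈ s, ∀ c : ℝ, 0 < c → ((q.1, c • q.2) : PFX.EE n) ∈ s := by
    intro q hq c hc
    exact ⟨(hmem q hq).1, smul_ne_zero hc.ne' (hmem q hq).2⟩
  have hhom : ∀ q ∈ s, ∀ c : ℝ, 0 < c → A (q.1, c • q.2) = c * A q := by
    intro q hq c hc
    exact hF.homog q.1 (hmem q hq).1 q.2 c hc
  -- translation of first-order data
  have hAyeq : ∀ q ∈ s, ∀ m : Fin n, dy F m q.1 q.2 = PFX.D A (PFX.vy m) q := by
    intro q hq m
    have := PFX.dy_eq (T := F) (f := A) (x := q.1) (y := q.2)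
      (PFX.diffAt hs hA hq) Filter.EventuallyEq.rfl m
    simpa using this
  have hAxeq : ∀ q ∈ s, ∀ m : Fin n, dx F m q.1 q.2 = PFX.D A (PFX.vx m) q := by
    intro q hq m
    have := PFX.dx_eq (T := F) (f := A) (x := q.1) (y := q.2)
      (PFX.diffAt hs hA hq) Filter.EventuallyEq.rfl m
    simpa using this
  have hPeq : ∀ q ∈ s, projFactor F q.1 q.2 = PFX.Pf A q := by
    intro q hq
    unfold projFactor PFX.Pf
    have hnum : ∑ m, q.2 m * dx F m q.1 q.2 = ∑ m, q.2 m * PFX.D A (PFX.vx m) q :=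
      Finset.sum_congr rfl fun m _ => by rw [hAxeq q hq m]
    rw [hnum]
  have hPf := PFX.smooth_Pf hs hA hpos
  have hKf := PFX.smooth_Kf hs hA hpos
  have hPev : ∀ q ∈ s, (fun r : PFX.EE n => projFactor F r.1 r.2) =ᶠ[nhds q] PFX.Pf A :=
    fun q hq => Filter.eventuallyEq_of_mem (hs.mem_nhds hq) hPeq
  have hPyeq : ∀ q ∈ s, ∀ m : Fin n,
      dy (projFactor F) m q.1 q.2 = PFX.D (PFX.Pf A) (PFX.vy m) q := by
    intro q hq m
    have := PFX.dy_eq (T := projFactor F) (f := PFX.Pf A) (x := q.1) (y := q.2)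
      (PFX.diffAt hs hPf hq) (by simpa using hPev q hq) m
    simpa using this
  have hPxeq : ∀ q ∈ s, ∀ m : Fin n,
      dx (projFactor F) m q.1 q.2 = PFX.D (PFX.Pf A) (PFX.vx m) q := by
    intro q hq m
    have := PFX.dx_eq (T := projFactor F) (f := PFX.Pf A) (x := q.1) (y := q.2)
      (PFX.diffAt hs hPf hq) (by simpa using hPev q hq) m
    simpa using this
  have hKeq : ∀ q ∈ s, flagCurvPF F q.1 q.2 = PFX.Kf A q := by
    intro q hq
    unfold flagCurvPF PFX.Kf
    rw [hPeq q hq]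
    have hnum : ∑ m, q.2 m * dx (projFactor F) m q.1 q.2 = PFX.Qf A q :=
      Finset.sum_congr rfl fun m _ => by rw [hPxeq q hq m]
    rw [hnum]
  have hKev : ∀ q ∈ s, (fun r : PFX.EE n => flagCurvPF F r.1 r.2) =ᶠ[nhds q] PFX.Kf A :=
    fun q hq => Filter.eventuallyEq_of_mem (hs.mem_nhds hq) hKeq
  have hKyeq : ∀ q ∈ s, ∀ m : Fin n,
      dy (flagCurvPF F) m q.1 q.2 = PFX.D (PFX.Kf A) (PFX.vy m) q := by
    intro q hq m
    have := PFX.dy_eq (T := flagCurvPF F) (f := PFX.Kf A) (x := q.1) (y := q.2)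
      (PFX.diffAt hs hKf hq) (by simpa using hKev q hq) m
    simpa using this
  have hKxeq : ∀ q ∈ s, ∀ m : Fin n,
      dx (flagCurvPF F) m q.1 q.2 = PFX.D (PFX.Kf A) (PFX.vx m) q := by
    intro q hq m
    have := PFX.dx_eq (T := flagCurvPF F) (f := PFX.Kf A) (x := q.1) (y := q.2)
      (PFX.diffAt hs hKf hq) (by simpa using hKev q hq) m
    simpa using this
  -- Hamel equations in the product-space form
  have hHam : ∀ q ∈ s, ∀ k l : Fin n,
      PFX.D (PFX.D A (PFX.vy k)) (PFX.vx l) q = PFX.D (PFX.D A (PFX.vy l)) (PFX.vx k) q := by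
    intro q hq k l
    have hAy : ∀ m : Fin n, ∀ r ∈ s, dy F m r.1 r.2 = PFX.D A (PFX.vy m) r :=
      fun m r hr => hAyeq r hr m
    have e1 : dx (dy F k) l q.1 q.2 = PFX.D (PFX.D A (PFX.vy k)) (PFX.vx l) q := by
      have := PFX.dx_eq (T := dy F k) (f := PFX.D A (PFX.vy k)) (x := q.1) (y := q.2)
        (PFX.diffAt hs (PFX.smooth_D hs hA (PFX.vy k)) hq)
        (by
          have := Filter.eventuallyEq_of_mem (hs.mem_nhds hq) (fun r hr => hAy k r hr)
          simpa using this) l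
      simpa using this
    have e2 : dx (dy F l) k q.1 q.2 = PFX.D (PFX.D A (PFX.vy l)) (PFX.vx k) q := by
      have := PFX.dx_eq (T := dy F l) (f := PFX.D A (PFX.vy l)) (x := q.1) (y := q.2)
        (PFX.diffAt hs (PFX.smooth_D hs hA (PFX.vy l)) hq)
        (by
          have := Filter.eventuallyEq_of_mem (hs.mem_nhds hq) (fun r hr => hAy l r hr)
          simpa using this) k
      simpa using this
    rw [← e1, ← e2]
    exact hPF q.1 (hmem q hq).1 q.2 (hmem q hq).2 k l
  intro x hx y hy k l
  have hp : ((x, y) : PFX.EE n) ∈ s := ⟨hx, hy⟩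
  have hmain := PFX.master hs hA hpos hinv hhom hHam hp k l
  -- second-order translations at the point
  have hKyx : ∀ m j : Fin n,
      dx (dy (flagCurvPF F) m) j x y
        = PFX.D (PFX.D (PFX.Kf A) (PFX.vy m)) (PFX.vx j) ((x, y) : PFX.EE n) := by
    intro m j
    have := PFX.dx_eq (T := dy (flagCurvPF F) m) (f := PFX.D (PFX.Kf A) (PFX.vy m))
      (x := x) (y := y)
      (PFX.diffAt hs (PFX.smooth_D hs hKf (PFX.vy m)) hp)
      (by
        have := Filter.eventuallyEq_of_mem (hs.mem_nhds hp)
          (fun r hr => hKyeq r hr m)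
        simpa using this) j
    simpa using this
  have hxy1 : (((x, y) : PFX.EE n)).1 = x := rfl
  have hxy2 : (((x, y) : PFX.EE n)).2 = y := rfl
  rw [show F x y = A ((x, y) : PFX.EE n) from rfl,
    show projFactor F x y = projFactor F (((x, y) : PFX.EE n)).1 (((x, y) : PFX.EE n)).2 from rfl,
    hPeq _ hp]
  rw [show dy (projFactor F) k x y = dy (projFactor F) k (((x, y) : PFX.EE n)).1 (((x, y) : PFX.EE n)).2 from rfl, hPyeq _ hp k]
  rw [show dy (projFactor F) l x y = dy (projFactor F) l (((x, y) : PFX.EE n)).1 (((x, y) : PFX.EE n)).2 from rfl, hPyeq _ hp l]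
  rw [show dy F k x y = dy F k (((x, y) : PFX.EE n)).1 (((x, y) : PFX.EE n)).2 from rfl, hAyeq _ hp k]
  rw [show dy F l x y = dy F l (((x, y) : PFX.EE n)).1 (((x, y) : PFX.EE n)).2 from rfl, hAyeq _ hp l]
  rw [show dy (flagCurvPF F) k x y = dy (flagCurvPF F) k (((x, y) : PFX.EE n)).1 (((x, y) : PFX.EE n)).2 from rfl, hKyeq _ hp k]
  rw [show dy (flagCurvPF F) l x y = dy (flagCurvPF F) l (((x, y) : PFX.EE n)).1 (((x, y) : PFX.EE n)).2 from rfl, hKyeq _ hp l]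
  rw [show dx (flagCurvPF F) k x y = dx (flagCurvPF F) k (((x, y) : PFX.EE n)).1 (((x, y) : PFX.EE n)).2 from rfl, hKxeq _ hp k]
  rw [show dx (flagCurvPF F) l x y = dx (flagCurvPF F) l (((x, y) : PFX.EE n)).1 (((x, y) : PFX.EE n)).2 from rfl, hKxeq _ hp l]
  rw [hKyx l k, hKyx k l]
  linarith [hmain]
end
end
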